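/- arXiv:math/0703242 — 8 statements merged into one kernel-verified Lean document; each statement's English description precedes it below -/
import Mathlib

section
/- If H_n is a polynomial of degree n that is orthogonal in L²(dμ) to z, z², ..., z^{n-1}, and λ is a zero of H_n, then H_n(z) = C(z − λ)K_{n-1}(z, λ) for some constant C, where K_{n-1}(z, λ) = Σ_{j=0}^{n-1} φ_j(z)·conj(φ_j(λ)) is the reproducing kernel. -/
open MeasureTheory Polynomial

def msupport (μ : Measure ℂ) : Set ℂ := {z | ∀ ε > 0, μ (Metric.ball z ε) ≠ 0}

lemma eval_norm_le (P : Polynomial ℂ) {z : ℂ} (hz : ‖z‖ = 1) :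
    ‖P.eval z‖ ≤ ∑ i ∈ Finset.range (P.natDegree + 1), ‖P.coeff i‖ := by
  rw [Polynomial.eval_eq_sum_range]
  refine (norm_sum_le _ _).trans (Finset.sum_le_sum fun i _ => ?_)
  rw [norm_mul, norm_pow]
  simp [hz]

lemma integrable_poly_conj (μ : Measure ℂ) [IsProbabilityMeasure μ]
    (hcirc : ∀ᵐ z ∂μ, ‖z‖ = 1) (P R : Polynomial ℂ) :
    Integrable (fun z => P.eval z * (starRingEnd ℂ) (R.eval z)) μ := by
  apply Integrable.mono' (g := fun _ => (∑ i ∈ Finset.range (P.natDegree+1), ‖P.coeff i‖) *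
      (∑ i ∈ Finset.range (R.natDegree+1), ‖R.coeff i‖)) (integrable_const _)
  · exact ((P.continuous).mul (Complex.continuous_conj.comp R.continuous)).aestronglyMeasurable
  · filter_upwards [hcirc] with z hz
    rw [norm_mul]
    have h1 : ‖(starRingEnd ℂ) (R.eval z)‖ = ‖R.eval z‖ := RCLike.norm_conj _
    rw [h1]
    exact mul_le_mul (eval_norm_le P hz) (eval_norm_le R hz) (norm_nonneg _)
      (Finset.sum_nonneg fun _ _ => norm_nonneg _)

lemma span_phi (φ : ℕ → Polynomial ℂ) (hdeg : ∀ j, (φ j).natDegree = j)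
    (hne : ∀ j, φ j ≠ 0) :
    ∀ m (P : Polynomial ℂ), (P = 0 ∨ P.natDegree < m) →
      ∃ d : ℕ → ℂ, P = ∑ j ∈ Finset.range m, Polynomial.C (d j) * φ j := by
  intro m
  induction m with
  | zero =>
    rintro P (rfl | h)
    · exact ⟨0, by simp⟩
    · omega
  | succ m ih =>
    intro P hP
    by_cases h0 : P = 0 ∨ P.natDegree < m
    · obtain ⟨d, hd⟩ := ih P h0
      refine ⟨Function.update d m 0, ?_⟩
      have hcong : ∑ j ∈ Finset.range m, Polynomial.C (Function.update d m 0 j) * φ j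
          = ∑ j ∈ Finset.range m, Polynomial.C (d j) * φ j :=
        Finset.sum_congr rfl fun j hj => by
          rw [Function.update_of_ne (Finset.mem_range.1 hj).ne]
      rw [Finset.sum_range_succ, hcong, Function.update_self]
      simp [hd]
    · push_neg at h0
      obtain ⟨hP0, hPd⟩ := h0
      have hPm : P.natDegree = m := by
        rcases hP with rfl | h
        · exact absurd rfl hP0
        · omega
      set c : ℂ := P.leadingCoeff / (φ m).leadingCoeff with hc
      set P' : Polynomial ℂ := P - Polynomial.C c * φ m with hP'
      have hlc : (φ m).leadingCoeff ≠ 0 := Polynomial.leadingCoeff_ne_zero.2 (hne m)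
      have hcm : P'.coeff m = 0 := by
        simp only [hP', Polynomial.coeff_sub, Polynomial.coeff_C_mul]
        have h1 : (φ m).coeff m = (φ m).leadingCoeff := by
          rw [Polynomial.leadingCoeff, hdeg m]
        have h2 : P.coeff m = P.leadingCoeff := by rw [Polynomial.leadingCoeff, hPm]
        rw [h1, h2, hc, div_mul_cancel₀ _ hlc, sub_self]
      have hP'le : P'.natDegree ≤ m := by
        refine (Polynomial.natDegree_sub_le _ _).trans ?_
        rw [sup_le_iff]
        exact ⟨hPm.le, (Polynomial.natDegree_C_mul_le _ _).trans (hdeg m).le⟩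
      have hsmall : P' = 0 ∨ P'.natDegree < m := by
        by_cases h : P' = 0
        · exact Or.inl h
        · right
          rcases lt_or_eq_of_le hP'le with h' | h'
          · exact h'
          · exact absurd (by rw [Polynomial.leadingCoeff, h']; exact hcm)
              (Polynomial.leadingCoeff_ne_zero.2 h)
      obtain ⟨d, hd⟩ := ih P' hsmall
      refine ⟨Function.update d m c, ?_⟩
      have hcong : ∑ j ∈ Finset.range m, Polynomial.C (Function.update d m c j) * φ j
          = ∑ j ∈ Finset.range m, Polynomial.C (d j) * φ j :=
        Finset.sum_congr rfl fun j hj => by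
          rw [Function.update_of_ne (Finset.mem_range.1 hj).ne]
      rw [Finset.sum_range_succ, hcong, Function.update_self, ← hd, hP']
      ring

/-- If `H` is a degree-`n` polynomial orthogonal in `L²(dμ)` to `z, …, z^{n-1}` and
`lam ∈ ∂𝔻` is a zero of `H`, then `H(z) = C (z - lam) K_{n-1}(z, lam)` where
`K_{n-1}` is the reproducing kernel built from the orthonormal polynomials. -/
theorem paraorthogonal_kernel_representation
    (μ : Measure ℂ) [IsProbabilityMeasure μ]
    (hcirc : ∀ᵐ z ∂μ, ‖z‖ = 1)
    (hinf : (msupport μ).Infinite)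
    (φ : ℕ → Polynomial ℂ)
    (hφdeg : ∀ j, (φ j).natDegree = j)
    (hφon : ∀ i j, ∫ z, (φ i).eval z * (starRingEnd ℂ) ((φ j).eval z) ∂μ
      = if i = j then 1 else 0)
    (n : ℕ) (hn : 1 ≤ n)
    (H : Polynomial ℂ) (hHdeg : H.natDegree = n)
    (hHorth : ∀ k, 1 ≤ k → k ≤ n - 1 →
      ∫ z, H.eval z * (starRingEnd ℂ) (z ^ k) ∂μ = 0)
    (lam : ℂ) (hlam : ‖lam‖ = 1) (hroot : H.eval lam = 0) :
    ∃ Cc : ℂ, ∀ z, H.eval z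
      = Cc * (z - lam)
        * ∑ j ∈ Finset.range n, (φ j).eval z * (starRingEnd ℂ) ((φ j).eval lam) := by
  have hφne : ∀ j, φ j ≠ 0 := by
    intro j hj
    have := hφon j j
    simp [hj] at this
  have hH0 : H ≠ 0 := by
    intro h
    rw [h, Polynomial.natDegree_zero] at hHdeg
    omega
  obtain ⟨Q, hQ⟩ : (X - Polynomial.C lam) ∣ H := dvd_iff_isRoot.2 hroot
  have hQ0 : Q ≠ 0 := by
    rintro rfl
    rw [mul_zero] at hQ
    exact hH0 hQ
  have hQdeg : Q.natDegree < n := by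
    have h := Polynomial.natDegree_mul (Polynomial.X_sub_C_ne_zero lam) hQ0
    rw [← hQ, hHdeg, Polynomial.natDegree_X_sub_C] at h
    omega
  obtain ⟨d, hd⟩ := span_phi φ hφdeg hφne n Q (Or.inr hQdeg)
  -- Step A
  have stepA : ∀ i, i < n →
      ∫ z, Q.eval z * (starRingEnd ℂ) ((φ i).eval z) ∂μ = d i := by
    intro i hi
    have hfun : (fun z => Q.eval z * (starRingEnd ℂ) ((φ i).eval z))
        = fun z => ∑ j ∈ Finset.range n,
            d j * ((φ j).eval z * (starRingEnd ℂ) ((φ i).eval z)) := by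
      funext z
      rw [hd, Polynomial.eval_finset_sum, Finset.sum_mul]
      exact Finset.sum_congr rfl fun j _ => by simp [mul_assoc]
    rw [hfun, integral_finset_sum _ (fun j _ =>
      (integrable_poly_conj μ hcirc (φ j) (φ i)).const_mul (d j))]
    have : ∀ j ∈ Finset.range n,
        ∫ z, d j * ((φ j).eval z * (starRingEnd ℂ) ((φ i).eval z)) ∂μ
          = if j = i then d j else 0 := by
      intro j _
      rw [MeasureTheory.integral_const_mul, hφon j i]
      by_cases h : j = i <;> simp [h]
    rw [Finset.sum_congr rfl this, Finset.sum_ite_eq' (Finset.range n) i d,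
      if_pos (Finset.mem_range.2 hi)]
  -- Step A'
  have stepA' : ∀ e : ℕ → ℂ,
      ∫ z, Q.eval z * (starRingEnd ℂ)
        ((∑ j ∈ Finset.range n, Polynomial.C (e j) * φ j).eval z) ∂μ
      = ∑ j ∈ Finset.range n, (starRingEnd ℂ) (e j) * d j := by
    intro e
    have hfun : (fun z => Q.eval z * (starRingEnd ℂ)
        ((∑ j ∈ Finset.range n, Polynomial.C (e j) * φ j).eval z))
        = fun z => ∑ j ∈ Finset.range n,
            (starRingEnd ℂ) (e j) * (Q.eval z * (starRingEnd ℂ) ((φ j).eval z)) := by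
      funext z
      rw [Polynomial.eval_finset_sum, map_sum, Finset.mul_sum]
      exact Finset.sum_congr rfl fun j _ => by
        rw [Polynomial.eval_mul, Polynomial.eval_C, map_mul]; ring
    rw [hfun, integral_finset_sum _ (fun j _ =>
      (integrable_poly_conj μ hcirc Q (φ j)).const_mul _)]
    exact Finset.sum_congr rfl fun j hj => by
      rw [MeasureTheory.integral_const_mul, stepA j (Finset.mem_range.1 hj)]
  -- key orthogonality
  have key : ∀ R : Polynomial ℂ, (R = 0 ∨ R.natDegree < n - 1) →
      ∫ z, Q.eval z * (starRingEnd ℂ)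
        (((X - Polynomial.C lam) * R).eval z) ∂μ = 0 := by
    intro R hR
    have hRrep : ∀ z : ℂ, R.eval z = ∑ m ∈ Finset.range (n-1), R.coeff m * z ^ m := by
      rcases hR with rfl | h
      · simp
      · intro z; exact Polynomial.eval_eq_sum_range' h z
    have hlc : lam * (starRingEnd ℂ) lam = 1 := by
      rw [Complex.mul_conj, Complex.normSq_eq_norm_sq, hlam]
      norm_num
    have hae : (fun z => Q.eval z * (starRingEnd ℂ) (((X - Polynomial.C lam) * R).eval z))
        =ᵐ[μ] fun z => -((starRingEnd ℂ) lam) * ∑ m ∈ Finset.range (n-1),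
            (starRingEnd ℂ) (R.coeff m) * (H.eval z * (starRingEnd ℂ) (z ^ (m+1))) := by
      filter_upwards [hcirc] with z hz
      have hzc : z * (starRingEnd ℂ) z = 1 := by
        rw [Complex.mul_conj, Complex.normSq_eq_norm_sq, hz]
        norm_num
      have hHz : H.eval z = (z - lam) * Q.eval z := by
        rw [hQ, Polynomial.eval_mul, Polynomial.eval_sub, Polynomial.eval_X, Polynomial.eval_C]
      have hconjR : (starRingEnd ℂ) (R.eval z)
          = ∑ m ∈ Finset.range (n-1), (starRingEnd ℂ) (R.coeff m) * ((starRingEnd ℂ) z) ^ m := by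
        rw [hRrep z, map_sum]
        exact Finset.sum_congr rfl fun m _ => by rw [map_mul, map_pow]
      have hsum : ∑ m ∈ Finset.range (n-1),
          (starRingEnd ℂ) (R.coeff m) * (H.eval z * (starRingEnd ℂ) (z ^ (m+1)))
          = (H.eval z * (starRingEnd ℂ) z) * (starRingEnd ℂ) (R.eval z) := by
        rw [hconjR, Finset.mul_sum]
        refine Finset.sum_congr rfl fun m _ => ?_
        rw [map_pow]
        ring
      rw [hsum, Polynomial.eval_mul, Polynomial.eval_sub, Polynomial.eval_X, Polynomial.eval_C,
        map_mul, map_sub, hHz]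
      linear_combination (Q.eval z * (starRingEnd ℂ) (R.eval z) *
        (starRingEnd ℂ) lam) * hzc - (Q.eval z * (starRingEnd ℂ) (R.eval z) *
        (starRingEnd ℂ) z) * hlc
    rw [integral_congr_ae hae, MeasureTheory.integral_const_mul]
    rw [integral_finset_sum _ (fun m _ => by
      have := (integrable_poly_conj μ hcirc H (X ^ (m+1))).const_mul ((starRingEnd ℂ) (R.coeff m))
      simpa using this)]
    have hz0 : ∀ m ∈ Finset.range (n-1),
        ∫ z, (starRingEnd ℂ) (R.coeff m) * (H.eval z * (starRingEnd ℂ) (z ^ (m+1))) ∂μ = 0 := by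
      intro m hm
      have hmn := Finset.mem_range.1 hm
      rw [MeasureTheory.integral_const_mul, hHorth (m+1) (by omega) (by omega), mul_zero]
    rw [Finset.sum_congr rfl hz0, Finset.sum_const_zero, mul_zero]
  -- Step C
  set k : ℂ := ∑ j ∈ Finset.range n, (φ j).eval lam * (starRingEnd ℂ) ((φ j).eval lam) with hk
  set s : ℂ := ∑ j ∈ Finset.range n, (φ j).eval lam * d j with hs
  have hφ0lam : (φ 0).eval lam ≠ 0 := by
    obtain ⟨c, hc⟩ := Polynomial.natDegree_eq_zero.1 (hφdeg 0)
    have hc0 : c ≠ 0 := fun h => hφne 0 (by rw [← hc, h, map_zero])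
    rw [← hc, Polynomial.eval_C]
    exact hc0
  have hkre : k = ((∑ j ∈ Finset.range n, Complex.normSq ((φ j).eval lam) : ℝ) : ℂ) := by
    rw [hk]
    push_cast
    exact Finset.sum_congr rfl fun j _ => Complex.mul_conj _
  have hk0 : k ≠ 0 := by
    rw [hkre, Ne, Complex.ofReal_eq_zero]
    have : 0 < ∑ j ∈ Finset.range n, Complex.normSq ((φ j).eval lam) :=
      Finset.sum_pos' (fun j _ => Complex.normSq_nonneg _)
        ⟨0, Finset.mem_range.2 hn, Complex.normSq_pos.2 hφ0lam⟩
    linarith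
  have hkconj : (starRingEnd ℂ) k = k := by rw [hkre, Complex.conj_ofReal]
  have keyi : ∀ i, i < n → k * d i = (starRingEnd ℂ) ((φ i).eval lam) * s := by
    intro i hi
    set e : ℕ → ℂ := fun j => (if i = j then k else 0)
      - (φ i).eval lam * (starRingEnd ℂ) ((φ j).eval lam) with he
    set Pp : Polynomial ℂ := ∑ j ∈ Finset.range n, Polynomial.C (e j) * φ j with hPp
    have hProot : Pp.IsRoot lam := by
      rw [Polynomial.IsRoot, hPp, Polynomial.eval_finset_sum]
      have hterm : ∀ j ∈ Finset.range n, (Polynomial.C (e j) * φ j).eval lam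
          = (if i = j then k * (φ j).eval lam else 0)
            - (φ i).eval lam * ((φ j).eval lam * (starRingEnd ℂ) ((φ j).eval lam)) := by
        intro j _
        rw [Polynomial.eval_mul, Polynomial.eval_C, he]
        by_cases h : i = j <;> simp [h] <;> ring
      rw [Finset.sum_congr rfl hterm, Finset.sum_sub_distrib, ← Finset.mul_sum, ← hk,
        Finset.sum_ite_eq (Finset.range n) i _, if_pos (Finset.mem_range.2 hi)]
      ring
    obtain ⟨R, hR⟩ := dvd_iff_isRoot.2 hProot
    have hPdeg : Pp.natDegree ≤ n - 1 := by
      apply Polynomial.natDegree_sum_le_of_forall_le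
      intro j hj
      refine (Polynomial.natDegree_C_mul_le _ _).trans ?_
      rw [hφdeg j]
      have := Finset.mem_range.1 hj
      omega
    have hRsmall : R = 0 ∨ R.natDegree < n - 1 := by
      by_cases h : R = 0
      · exact Or.inl h
      · right
        have hmul := Polynomial.natDegree_mul (Polynomial.X_sub_C_ne_zero lam) h
        rw [← hR, Polynomial.natDegree_X_sub_C] at hmul
        omega
    have h0 := key R hRsmall
    rw [← hR, hPp, stepA' e] at h0
    have hexp : ∀ j ∈ Finset.range n, (starRingEnd ℂ) (e j) * d j
        = (if i = j then k * d j else 0)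
          - (starRingEnd ℂ) ((φ i).eval lam) * ((φ j).eval lam * d j) := by
      intro j _
      rw [he]
      by_cases h : i = j <;> simp [h, hkconj] <;> ring
    rw [Finset.sum_congr rfl hexp, Finset.sum_sub_distrib, ← Finset.mul_sum, ← hs,
      Finset.sum_ite_eq (Finset.range n) i _, if_pos (Finset.mem_range.2 hi)] at h0
    linear_combination h0
  refine ⟨s / k, fun z => ?_⟩
  have hdj : ∀ j, j < n → d j = s / k * (starRingEnd ℂ) ((φ j).eval lam) := by
    intro j hj
    have h1 := keyi j hj
    field_simp
    linear_combination h1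
  have hQz : Q.eval z
      = s / k * ∑ j ∈ Finset.range n, (φ j).eval z * (starRingEnd ℂ) ((φ j).eval lam) := by
    rw [hd, Polynomial.eval_finset_sum, Finset.mul_sum]
    refine Finset.sum_congr rfl fun j hj => ?_
    rw [Polynomial.eval_mul, Polynomial.eval_C, hdj j (Finset.mem_range.1 hj)]
    ring
  have hHz : H.eval z = (z - lam) * Q.eval z := by
    rw [hQ, Polynomial.eval_mul, Polynomial.eval_sub, Polynomial.eval_X, Polynomial.eval_C]
  rw [hHz, hQz]
  ring
end

section
/- If h is a polynomial of degree at most n−1 such that ⟨zh, z^m⟩ = ⟨λh, z^m⟩ for all 1 ≤ m ≤ n−1 (where λ ∈ ∂𝔻), then ⟨h, z^m⟩ = conj(λ)^m · ⟨h, 1⟩ for all 0 ≤ m ≤ n−1. -/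
open MeasureTheory Polynomial

/-- If `h` has degree at most `n-1` and `⟨z·h, z^m⟩ = ⟨lam·h, z^m⟩` for `1 ≤ m ≤ n-1`
(with `lam` on the unit circle), then `⟨h, z^m⟩ = conj(lam)^m ⟨h, 1⟩` for `0 ≤ m ≤ n-1`. -/
theorem moments_of_quotient_polynomial
    (μ : Measure ℂ) [IsProbabilityMeasure μ]
    (hcirc : ∀ᵐ z ∂μ, ‖z‖ = 1)
    (hinf : (msupport μ).Infinite)
    (n : ℕ) (h : Polynomial ℂ) (hdeg : h.natDegree ≤ n - 1)
    (lam : ℂ) (hlam : ‖lam‖ = 1)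
    (hyp : ∀ m, 1 ≤ m → m ≤ n - 1 →
      ∫ z, (z * h.eval z) * (starRingEnd ℂ) (z ^ m) ∂μ
        = ∫ z, (lam * h.eval z) * (starRingEnd ℂ) (z ^ m) ∂μ) :
    ∀ m, m ≤ n - 1 →
      ∫ z, h.eval z * (starRingEnd ℂ) (z ^ m) ∂μ
        = (starRingEnd ℂ) lam ^ m * ∫ z, h.eval z * (starRingEnd ℂ) (1 : ℂ) ∂μ := by
  intro m hm
  induction m with
  | zero => simp
  | succ k ih =>
    have hk : k ≤ n - 1 := le_trans (Nat.le_succ k) hm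
    have ihe := ih hk
    have h1 := hyp (k+1) (Nat.succ_le_succ (Nat.zero_le k)) hm
    have hlam1 : (starRingEnd ℂ) lam * lam = 1 := by
      rw [mul_comm, Complex.mul_conj, Complex.normSq_eq_norm_sq, hlam]; norm_num
    have hae : ∀ᵐ z ∂μ, (z * h.eval z) * (starRingEnd ℂ) (z ^ (k+1))
        = h.eval z * (starRingEnd ℂ) (z ^ k) := by
      filter_upwards [hcirc] with z hz
      have hz1 : z * (starRingEnd ℂ) z = 1 := by
        rw [Complex.mul_conj, Complex.normSq_eq_norm_sq, hz]; norm_num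
      calc (z * h.eval z) * (starRingEnd ℂ) (z ^ (k+1))
          = (h.eval z * (starRingEnd ℂ) z ^ k) * (z * (starRingEnd ℂ) z) := by
            rw [map_pow]; ring
        _ = h.eval z * (starRingEnd ℂ) (z ^ k) := by rw [hz1, map_pow]; ring
    have heq : ∫ z, h.eval z * (starRingEnd ℂ) (z ^ k) ∂μ
        = lam * ∫ z, h.eval z * (starRingEnd ℂ) (z ^ (k+1)) ∂μ := by
      rw [← MeasureTheory.integral_const_mul, ← integral_congr_ae hae, h1]
      congr 1; ext z; ring
    have : (starRingEnd ℂ) lam * ∫ z, h.eval z * (starRingEnd ℂ) (z ^ k) ∂μ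
        = ∫ z, h.eval z * (starRingEnd ℂ) (z ^ (k+1)) ∂μ := by
      rw [heq, ← mul_assoc, hlam1, one_mul]
    rw [← this, ihe, pow_succ]
    ring
end

section
/- All zeros of a paraorthogonal polynomial H_n(z, β) = zΦ_{n-1}(z) − conj(β)Φ*_{n-1}(z), with |β| = 1, are simple and lie on the unit circle. -/
open MeasureTheory Polynomial

section Aux

open Complex

private theorem aux_reflect_1_X_sub_C (b : ℂ) : reflect 1 (X - C b) = 1 - C b * X := by
  have h1 : (X - C b : ℂ[X]) = C 1 * X ^ 1 + C (-b) * X ^ 0 := by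
    simp [sub_eq_add_neg]
  rw [h1, reflect_add, reflect_C_mul_X_pow, reflect_C_mul_X_pow]
  simp [revAt_le]
  ring

private theorem aux_deg_prod (s : Multiset ℂ) :
    ((s.map fun a => X - C a).prod).natDegree = Multiset.card s := by
  rw [natDegree_multiset_prod_of_monic]
  · rw [Multiset.map_map]
    have h : (Multiset.map (natDegree ∘ fun a => (X : ℂ[X]) - C a) s)
        = Multiset.map (fun _ => 1) s :=
      Multiset.map_congr rfl (fun x _ => by simp)
    rw [h]; simp [Multiset.map_const]
  · intro f hf
    obtain ⟨a, _, rfl⟩ := Multiset.mem_map.mp hf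
    exact monic_X_sub_C a

private theorem aux_reflect_prod (s : Multiset ℂ) :
    reflect (Multiset.card s) ((s.map fun a => X - C a).prod)
      = (s.map fun a => 1 - C a * X).prod := by
  induction s using Multiset.induction_on with
  | empty => simp [reflect_C]
  | cons a s ih =>
    simp only [Multiset.map_cons, Multiset.prod_cons, Multiset.card_cons]
    rw [show Multiset.card s + 1 = 1 + Multiset.card s by omega,
      reflect_mul _ _ (le_of_eq (natDegree_X_sub_C a)) (le_of_eq (aux_deg_prod s)),
      aux_reflect_1_X_sub_C, ih]

private theorem aux_logderiv (s : Multiset ℂ[X]) (z : ℂ) (h : ∀ p ∈ s, eval z p ≠ 0) :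
    eval z (derivative s.prod) / eval z s.prod
      = (s.map fun p => eval z (derivative p) / eval z p).sum := by
  induction s using Multiset.induction_on with
  | empty => simp
  | cons a s ih =>
    have ha : eval z a ≠ 0 := h a (Multiset.mem_cons_self a s)
    have hs : ∀ p ∈ s, eval z p ≠ 0 := fun p hp => h p (Multiset.mem_cons_of_mem hp)
    have hP : eval z s.prod ≠ 0 := by
      rw [eval_multiset_prod]
      refine Multiset.prod_ne_zero ?_
      intro h0
      obtain ⟨x, hx, hx0⟩ := Multiset.mem_map.mp h0
      exact hs x hx hx0
    rw [Multiset.prod_cons, derivative_mul, Multiset.map_cons, Multiset.sum_cons, ← ih hs]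
    simp only [eval_add, eval_mul]
    field_simp

private theorem aux_normSq_id (a z : ℂ) :
    normSq (1 - (starRingEnd ℂ) a * z) - normSq (z - a)
      = (1 - normSq a) * (1 - normSq z) := by
  simp [Complex.normSq_apply, Complex.mul_re, Complex.mul_im]; ring

private theorem aux_abs_lt (a z : ℂ) (ha : ‖a‖ < 1) (hz : ‖z‖ < 1) :
    ‖z - a‖ < ‖1 - (starRingEnd ℂ) a * z‖ := by
  have h1 : normSq (z - a) < normSq (1 - (starRingEnd ℂ) a * z) := by
    have h2 := aux_normSq_id a z
    have ha2 : normSq a < 1 := by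
      rw [← Complex.sq_norm]; nlinarith [norm_nonneg a]
    have hz2 : normSq z < 1 := by
      rw [← Complex.sq_norm]; nlinarith [norm_nonneg z]
    nlinarith
  rw [Complex.norm_def, Complex.norm_def]
  exact Real.sqrt_lt_sqrt (normSq_nonneg _) h1

private theorem aux_abs_gt (a z : ℂ) (ha : ‖a‖ < 1) (hz : 1 < ‖z‖) :
    ‖1 - (starRingEnd ℂ) a * z‖ < ‖z - a‖ := by
  have h1 : normSq (1 - (starRingEnd ℂ) a * z) < normSq (z - a) := by
    have h2 := aux_normSq_id a z
    have ha2 : normSq a < 1 := by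
      rw [← Complex.sq_norm]; nlinarith [norm_nonneg a]
    have hz2 : 1 < normSq z := by
      rw [← Complex.sq_norm]; nlinarith
    nlinarith
  rw [Complex.norm_def, Complex.norm_def]
  exact Real.sqrt_lt_sqrt (normSq_nonneg _) h1

private theorem aux_one_sub_ne (a z : ℂ) (ha : ‖a‖ < 1)
    (hz : ‖z‖ = 1) : 1 - (starRingEnd ℂ) a * z ≠ 0 := by
  intro h
  have h1 : (starRingEnd ℂ) a * z = 1 := by linear_combination -h
  have h2 : ‖(starRingEnd ℂ) a * z‖ = 1 := by rw [h1]; simp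
  rw [norm_mul, Complex.norm_conj, hz, mul_one] at h2
  exact absurd h2 (ne_of_lt ha)

private theorem aux_sub_ne (a z : ℂ) (ha : ‖a‖ < 1)
    (hz : ‖z‖ = 1) : z - a ≠ 0 := by
  intro h
  rw [sub_eq_zero] at h
  rw [h] at hz
  exact absurd hz (ne_of_lt ha)

private theorem aux_prod_nonneg (s : Multiset ℂ) (f : ℂ → ℝ) (hf : ∀ a ∈ s, 0 ≤ f a) :
    0 ≤ (s.map f).prod := by
  induction s using Multiset.induction_on with
  | empty => simp
  | cons a s ih =>
    simp only [Multiset.map_cons, Multiset.prod_cons]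
    exact mul_nonneg (hf a (Multiset.mem_cons_self a s))
      (ih fun x hx => hf x (Multiset.mem_cons_of_mem hx))

private theorem aux_mul_prod_lt (s : Multiset ℂ) (f g : ℂ → ℝ)
    (hf : ∀ a ∈ s, 0 ≤ f a) (hfg : ∀ a ∈ s, f a < g a)
    (c d : ℝ) (hc : 0 ≤ c) (hcd : c < d) :
    c * (s.map f).prod < d * (s.map g).prod := by
  induction s using Multiset.induction_on with
  | empty => simpa using hcd
  | cons a s ih =>
    simp only [Multiset.map_cons, Multiset.prod_cons]
    have h1 : c * (s.map f).prod < d * (s.map g).prod :=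
      ih (fun x hx => hf x (Multiset.mem_cons_of_mem hx))
        (fun x hx => hfg x (Multiset.mem_cons_of_mem hx))
    have h2 : 0 ≤ c * (s.map f).prod :=
      mul_nonneg hc (aux_prod_nonneg s f fun x hx => hf x (Multiset.mem_cons_of_mem hx))
    calc c * (f a * (s.map f).prod) = f a * (c * (s.map f).prod) := by ring
      _ < g a * (d * (s.map g).prod) :=
        mul_lt_mul'' (hfg a (Multiset.mem_cons_self a s)) h1
          (hf a (Multiset.mem_cons_self a s)) h2
      _ = d * (g a * (s.map g).prod) := by ring

private theorem aux_abs_prod (s : Multiset ℂ) :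
    ‖s.prod‖ = (s.map (‖·‖)).prod := by
  induction s using Multiset.induction_on with
  | empty => simp
  | cons a s ih => simp [ih]

private theorem aux_sum_map_sub (s : Multiset ℂ) (f g : ℂ → ℂ) :
    (s.map fun a => f a - g a).sum = (s.map f).sum - (s.map g).sum := by
  induction s using Multiset.induction_on with
  | empty => simp
  | cons a s ih => simp [ih]; ring

private theorem aux_re_sum (s : Multiset ℂ) (f : ℂ → ℂ) :
    ((s.map f).sum).re = (s.map fun a => (f a).re).sum := by
  induction s using Multiset.induction_on with
  | empty => simp
  | cons a s ih => simp [ih]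

private theorem aux_term_re_nonneg (a z : ℂ) (ha : ‖a‖ < 1)
    (hz : ‖z‖ = 1) :
    0 ≤ (z * (1 / (z - a)) - z * (-(starRingEnd ℂ) a / (1 - (starRingEnd ℂ) a * z))).re := by
  have hzz : z * (starRingEnd ℂ) z = 1 := by
    rw [Complex.mul_conj]
    norm_cast
    rw [← Complex.sq_norm, hz]; norm_num
  have hnz : normSq z = 1 := by rw [← Complex.sq_norm, hz]; norm_num
  have hna : normSq a < 1 := by
    rw [← Complex.sq_norm]; nlinarith [norm_nonneg a]
  have hv : z - a ≠ 0 := aux_sub_ne a z ha hz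
  have hu : 1 - (starRingEnd ℂ) a * z ≠ 0 := aux_one_sub_ne a z ha hz
  have hvc : (starRingEnd ℂ) (z - a) ≠ 0 :=
    fun h => hv (by simpa using congrArg (starRingEnd ℂ) h)
  have hvc' : (starRingEnd ℂ) z - (starRingEnd ℂ) a ≠ 0 := by
    rwa [← map_sub]
  have h2 : z * (-(starRingEnd ℂ) a / (1 - (starRingEnd ℂ) a * z))
      = -((starRingEnd ℂ) (a / (z - a))) := by
    rw [map_div₀, map_sub]
    rw [mul_div_assoc', ← neg_div, div_eq_div_iff hu hvc']
    linear_combination (-(starRingEnd ℂ) a) * hzz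
  rw [h2]
  set w := a / (z - a) with hw
  have h3 : z * (1 / (z - a)) - -(starRingEnd ℂ) w
      = (z + a) / (z - a) + ((starRingEnd ℂ) w - w) := by
    rw [hw]
    field_simp
    ring
  rw [h3]
  have h4 : ((z + a) / (z - a) + ((starRingEnd ℂ) w - w)).re
      = ((z + a) / (z - a)).re := by
    simp [Complex.add_re, Complex.sub_re, Complex.conj_re]
  rw [h4, Complex.div_re, ← add_div]
  apply div_nonneg _ (normSq_nonneg _)
  have h5 : (z + a).re * (z - a).re + (z + a).im * (z - a).im = 1 - normSq a := by
    simp only [Complex.add_re, Complex.add_im, Complex.sub_re, Complex.sub_im,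
      Complex.normSq_apply] at *
    nlinarith [hnz]
  rw [h5]
  linarith

end Aux

/-- All zeros of the paraorthogonal polynomial
`H_n(z,β) = zΦ_{n-1}(z) - conj(β)Φ*_{n-1}(z)` (with `|β| = 1`, and `Φ_{n-1}` the monic
orthogonal polynomial, all of whose zeros lie strictly inside the unit disk) are simple
and lie on the unit circle. -/
theorem paraorthogonal_zeros_simple_on_circle
    (μ : Measure ℂ) [IsProbabilityMeasure μ]
    (hcirc : ∀ᵐ z ∂μ, ‖z‖ = 1)
    (hinf : (msupport μ).Infinite)
    (n : ℕ) (hn : 1 ≤ n)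
    (Φ : Polynomial ℂ) (hΦmonic : Φ.Monic) (hΦdeg : Φ.natDegree = n - 1)
    (hΦorth : ∀ k, k < n - 1 → ∫ z, Φ.eval z * (starRingEnd ℂ) (z ^ k) ∂μ = 0)
    (hΦroots : ∀ z, Φ.IsRoot z → ‖z‖ < 1)
    (β : ℂ) (hβ : ‖β‖ = 1) :
    ∀ z, (X * Φ - C ((starRingEnd ℂ) β) * reflect (n - 1) (Φ.map (starRingEnd ℂ))).IsRoot z →
      ‖z‖ = 1 ∧
      (X * Φ - C ((starRingEnd ℂ) β)
        * reflect (n - 1) (Φ.map (starRingEnd ℂ))).rootMultiplicity z = 1 := by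
  classical
  have hsplits : Φ.Splits := IsAlgClosed.splits Φ
  set s := Φ.roots with hsdef
  have hsplit : Φ = (s.map fun a => X - C a).prod :=
    hsplits.eq_prod_roots_of_monic hΦmonic
  have hcard : Multiset.card s = n - 1 := by
    rw [← hΦdeg]; exact splits_iff_card_roots.mp hsplits
  have hroots_lt : ∀ a ∈ s, ‖a‖ < 1 :=
    fun a ha => hΦroots a (isRoot_of_mem_roots ha)
  set Q : ℂ[X] := (s.map fun a => 1 - C ((starRingEnd ℂ) a) * X).prod with hQdef
  have hmap : Φ.map (starRingEnd ℂ)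
      = ((s.map (starRingEnd ℂ)).map fun a => X - C a).prod := by
    conv_lhs => rw [hsplit]
    rw [Polynomial.map_multiset_prod, Multiset.map_map, Multiset.map_map]
    exact congrArg Multiset.prod (Multiset.map_congr rfl fun x _ => by simp)
  have hrefl : reflect (n - 1) (Φ.map (starRingEnd ℂ)) = Q := by
    have h1 := aux_reflect_prod (s.map (starRingEnd ℂ))
    rw [Multiset.card_map, hcard] at h1
    rw [hmap, h1, hQdef, Multiset.map_map]
    exact congrArg Multiset.prod (Multiset.map_congr rfl fun x _ => rfl)
  have hevalΦ : ∀ w : ℂ, eval w Φ = (s.map fun a => w - a).prod := by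
    intro w
    conv_lhs => rw [hsplit]
    rw [eval_multiset_prod, Multiset.map_map]
    exact congrArg Multiset.prod (Multiset.map_congr rfl fun x _ => by simp)
  have hevalQ : ∀ w : ℂ, eval w Q = (s.map fun a => 1 - (starRingEnd ℂ) a * w).prod := by
    intro w
    rw [hQdef, eval_multiset_prod, Multiset.map_map]
    exact congrArg Multiset.prod (Multiset.map_congr rfl fun x _ => by simp)
  have habsβ : ‖(starRingEnd ℂ) β‖ = 1 := by rw [Complex.norm_conj, hβ]
  have part1 : ∀ w : ℂ,
      (X * Φ - C ((starRingEnd ℂ) β) * reflect (n - 1) (Φ.map (starRingEnd ℂ))).IsRoot w →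
      ‖w‖ = 1 := by
    intro w hw
    have heq : w * eval w Φ = (starRingEnd ℂ) β * eval w Q := by
      have h0 : eval w (X * Φ - C ((starRingEnd ℂ) β)
          * reflect (n - 1) (Φ.map (starRingEnd ℂ))) = 0 := hw
      rw [hrefl] at h0
      simp only [eval_sub, eval_mul, eval_X, eval_C] at h0
      linear_combination h0
    have habs_eq : ‖w‖ * (s.map fun a => ‖w - a‖).prod
        = 1 * (s.map fun a => ‖1 - (starRingEnd ℂ) a * w‖).prod := by
      have h1 := congrArg (‖·‖) heq
      rw [norm_mul, norm_mul, habsβ, one_mul, hevalΦ, hevalQ, aux_abs_prod,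
        aux_abs_prod, Multiset.map_map, Multiset.map_map] at h1
      rw [one_mul]
      exact h1
    by_contra hne
    rcases lt_or_gt_of_ne hne with hlt | hgt
    · exact absurd habs_eq (ne_of_lt (aux_mul_prod_lt s _ _
        (fun a _ => norm_nonneg _)
        (fun a ha => aux_abs_lt a w (hroots_lt a ha) hlt)
        _ _ (norm_nonneg w) hlt))
    · exact absurd habs_eq.symm (ne_of_lt (aux_mul_prod_lt s _ _
        (fun a _ => norm_nonneg _)
        (fun a ha => aux_abs_gt a w (hroots_lt a ha) hgt)
        _ _ zero_le_one hgt))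
  intro z hz
  have hz1 : ‖z‖ = 1 := part1 z hz
  refine ⟨hz1, ?_⟩
  set H := X * Φ - C ((starRingEnd ℂ) β) * reflect (n - 1) (Φ.map (starRingEnd ℂ))
    with hHdef
  have hHQ : H = X * Φ - C ((starRingEnd ℂ) β) * Q := by rw [hHdef, hrefl]
  have hH0 : H ≠ 0 := by
    intro h0
    have h1 : ‖(2 : ℂ)‖ = 1 := part1 2 (by rw [h0]; simp [IsRoot])
    rw [Complex.norm_two] at h1
    norm_num at h1
  have hΦz : eval z Φ ≠ 0 := by
    rw [hevalΦ]
    refine Multiset.prod_ne_zero ?_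
    intro hmem
    obtain ⟨a, hamem, ha0⟩ := Multiset.mem_map.mp hmem
    exact aux_sub_ne a z (hroots_lt a hamem) hz1 ha0
  have hQz : eval z Q ≠ 0 := by
    rw [hevalQ]
    refine Multiset.prod_ne_zero ?_
    intro hmem
    obtain ⟨a, hamem, ha0⟩ := Multiset.mem_map.mp hmem
    exact aux_one_sub_ne a z (hroots_lt a hamem) hz1 ha0
  have hz0 : z ≠ 0 := by
    intro h; rw [h] at hz1; simp at hz1
  have heq : z * eval z Φ = (starRingEnd ℂ) β * eval z Q := by
    have h0 : eval z H = 0 := hz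
    rw [hHQ] at h0
    simp only [eval_sub, eval_mul, eval_X, eval_C] at h0
    linear_combination h0
  -- log derivatives
  have hdΦ : eval z (derivative Φ)
      = (s.map fun a => 1 / (z - a)).sum * eval z Φ := by
    have hne : ∀ p ∈ s.map fun a => (X : ℂ[X]) - C a, eval z p ≠ 0 := by
      intro p hp
      obtain ⟨a, ha, rfl⟩ := Multiset.mem_map.mp hp
      simp only [eval_sub, eval_X, eval_C]
      exact aux_sub_ne a z (hroots_lt a ha) hz1
    have h := aux_logderiv (s.map fun a => X - C a) z hne
    rw [← hsplit, Multiset.map_map] at h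
    have hcongr : (s.map fun a =>
        eval z (derivative ((X : ℂ[X]) - C a)) / eval z ((X : ℂ[X]) - C a))
        = s.map fun a => 1 / (z - a) :=
      Multiset.map_congr rfl fun x _ => by simp
    rw [show (Multiset.map ((fun p => eval z (derivative p) / eval z p) ∘
        fun a => (X : ℂ[X]) - C a) s) = s.map fun a =>
        eval z (derivative ((X : ℂ[X]) - C a)) / eval z ((X : ℂ[X]) - C a) from rfl,
      hcongr] at h
    exact (div_eq_iff hΦz).mp h
  have hdQ : eval z (derivative Q)
      = (s.map fun a => -(starRingEnd ℂ) a / (1 - (starRingEnd ℂ) a * z)).sum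
        * eval z Q := by
    have hne : ∀ p ∈ s.map fun a => (1 : ℂ[X]) - C ((starRingEnd ℂ) a) * X,
        eval z p ≠ 0 := by
      intro p hp
      obtain ⟨a, ha, rfl⟩ := Multiset.mem_map.mp hp
      simp only [eval_sub, eval_mul, eval_one, eval_X, eval_C]
      exact aux_one_sub_ne a z (hroots_lt a ha) hz1
    have h := aux_logderiv (s.map fun a => (1 : ℂ[X]) - C ((starRingEnd ℂ) a) * X) z hne
    rw [← hQdef, Multiset.map_map] at h
    have hcongr : (s.map fun a =>
        eval z (derivative ((1 : ℂ[X]) - C ((starRingEnd ℂ) a) * X))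
          / eval z ((1 : ℂ[X]) - C ((starRingEnd ℂ) a) * X))
        = s.map fun a => -(starRingEnd ℂ) a / (1 - (starRingEnd ℂ) a * z) :=
      Multiset.map_congr rfl fun x _ => by simp
    rw [show (Multiset.map ((fun p => eval z (derivative p) / eval z p) ∘
        fun a => (1 : ℂ[X]) - C ((starRingEnd ℂ) a) * X) s) = s.map fun a =>
        eval z (derivative ((1 : ℂ[X]) - C ((starRingEnd ℂ) a) * X))
          / eval z ((1 : ℂ[X]) - C ((starRingEnd ℂ) a) * X) from rfl,
      hcongr] at h
    exact (div_eq_iff hQz).mp h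
  set S1 := (s.map fun a => 1 / (z - a)).sum with hS1def
  set S2 := (s.map fun a => -(starRingEnd ℂ) a / (1 - (starRingEnd ℂ) a * z)).sum
    with hS2def
  have hdH : eval z (derivative H)
      = eval z Φ + z * eval z (derivative Φ)
        - (starRingEnd ℂ) β * eval z (derivative Q) := by
    rw [hHQ]
    simp only [derivative_sub, derivative_mul, derivative_X, derivative_C,
      eval_sub, eval_add, eval_mul, eval_X, eval_C, one_mul, zero_mul, zero_add]
  have hzH' : z * eval z (derivative H)
      = (z * eval z Φ) * (1 + z * S1 - z * S2) := by
    rw [hdH, hdΦ, hdQ]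
    linear_combination (z * S2) * heq
  have hre : 1 ≤ (1 + z * S1 - z * S2).re := by
    have h1 : z * S1 - z * S2 = (s.map fun a =>
        z * (1 / (z - a)) - z * (-(starRingEnd ℂ) a / (1 - (starRingEnd ℂ) a * z))).sum := by
      rw [hS1def, hS2def, ← Multiset.sum_map_mul_left, ← Multiset.sum_map_mul_left,
        ← aux_sum_map_sub]
    have h2 : 0 ≤ (z * S1 - z * S2).re := by
      rw [h1, aux_re_sum]
      refine Multiset.sum_nonneg ?_
      intro x hx
      obtain ⟨a, hamem, rfl⟩ := Multiset.mem_map.mp hx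
      exact aux_term_re_nonneg a z (hroots_lt a hamem) hz1
    have h3 : (1 + z * S1 - z * S2).re = 1 + (z * S1 - z * S2).re := by
      simp [Complex.add_re, Complex.sub_re, Complex.one_re]
      ring
    rw [h3]; linarith
  have hne : eval z (derivative H) ≠ 0 := by
    intro h0
    rw [h0, mul_zero] at hzH'
    have hfac : (1 + z * S1 - z * S2) ≠ 0 := by
      intro h
      rw [h] at hre
      simp at hre
      linarith
    exact (mul_ne_zero (mul_ne_zero hz0 hΦz) hfac) hzH'.symm
  have hpos : 0 < H.rootMultiplicity z := (rootMultiplicity_pos hH0).mpr hz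
  have hlt : H.rootMultiplicity z < 2 := by
    by_contra hge
    push_neg at hge
    have hd := derivative_rootMultiplicity_of_root (p := H) (t := z) hz
    have hd0 : 0 < (derivative H).rootMultiplicity z := by omega
    exact hne (rootMultiplicity_pos'.mp hd0).2
  omega
end

section
/- Let z₀ ∈ ∂𝔻 with δ = dist(z₀, supp μ) > 0 and let λ ∈ ∂𝔻, z₀ ≠ λ. If |h_{n+1}(z₀)| ≤ |h_n(z₀)|, then |h_n(z₀)| / K_{n-1}(z₀, z₀)^{1/2} ≥ (1/4)|φ_n(λ)|·|z₀ − λ|·δ. -/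
set_option linter.unusedSectionVars false
set_option maxHeartbeats 1000000


open MeasureTheory Polynomial

noncomputable section HNAux
namespace HNAux

/-- bound for polynomial eval on the unit circle -/
lemma abs_eval_le (p : Polynomial ℂ) {z : ℂ} (hz : Norm.norm z = 1) :
    Norm.norm (p.eval z) ≤ ∑ k ∈ Finset.range (p.natDegree + 1), Norm.norm (p.coeff k) := by
  rw [Polynomial.eval_eq_sum_range]
  refine le_trans (norm_sum_le _ _) ?_
  refine Finset.sum_le_sum fun k _ => ?_
  rw [norm_mul, norm_pow, hz, one_pow, mul_one]

def ipf (p q : Polynomial ℂ) : ℂ → ℂ := fun z => p.eval z * (starRingEnd ℂ) (q.eval z)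

def ip (μ : Measure ℂ) (p q : Polynomial ℂ) : ℂ := ∫ z, ipf p q z ∂μ

variable {μ : Measure ℂ}

lemma ipf_asm (p q : Polynomial ℂ) : AEStronglyMeasurable (ipf p q) μ :=
  ((p.continuous).mul (Complex.continuous_conj.comp q.continuous)).aestronglyMeasurable

variable [IsProbabilityMeasure μ] (hcirc : ∀ᵐ z ∂μ, Norm.norm z = 1)

include hcirc in
lemma integrable_ipf (p q : Polynomial ℂ) : Integrable (ipf p q) μ := by
  refine Integrable.mono' (integrable_const
    ((∑ k ∈ Finset.range (p.natDegree + 1), Norm.norm (p.coeff k)) *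
     (∑ k ∈ Finset.range (q.natDegree + 1), Norm.norm (q.coeff k)))) (ipf_asm p q) ?_
  filter_upwards [hcirc] with z hz
  have h1 := abs_eval_le p hz
  have h2 := abs_eval_le q hz
  have : ‖ipf p q z‖ = Norm.norm (p.eval z) * Norm.norm (q.eval z) := by
    simp [ipf]
  rw [this]
  exact mul_le_mul h1 h2 (norm_nonneg _) (le_trans (norm_nonneg _) h1)

lemma ip_conj_symm (p q : Polynomial ℂ) : ip μ p q = (starRingEnd ℂ) (ip μ q p) := by
  rw [ip, ip, ← integral_conj]
  congr 1; funext z; simp [ipf, mul_comm]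

include hcirc in
lemma ip_sum_left {s : Finset ℕ} (a : ℕ → ℂ) (p : ℕ → Polynomial ℂ) (q : Polynomial ℂ) :
    ip μ (∑ j ∈ s, Polynomial.C (a j) * p j) q = ∑ j ∈ s, a j * ip μ (p j) q := by
  have : ipf (∑ j ∈ s, Polynomial.C (a j) * p j) q
      = fun z => ∑ j ∈ s, a j * ipf (p j) q z := by
    funext z; simp [ipf, Finset.sum_mul, eval_finset_sum, mul_assoc]
  rw [ip, this, integral_finset_sum]
  · exact Finset.sum_congr rfl fun j _ => by rw [integral_const_mul]; rfl
  · intro j _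
    exact (integrable_ipf hcirc (p j) q).const_mul (a j)

lemma ip_smul_left (a : ℂ) (p q : Polynomial ℂ) :
    ip μ (Polynomial.C a * p) q = a * ip μ p q := by
  rw [ip, ip, ← integral_const_mul]
  congr 1; funext z; simp [ipf]; ring

lemma ip_smul_right (a : ℂ) (p q : Polynomial ℂ) :
    ip μ p (Polynomial.C a * q) = (starRingEnd ℂ) a * ip μ p q := by
  rw [ip_conj_symm, ip_smul_left, map_mul, ← ip_conj_symm]

include hcirc in
lemma ip_sub_left (p q r : Polynomial ℂ) :
    ip μ (p - q) r = ip μ p r - ip μ q r := by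
  have : ipf (p - q) r = fun z => ipf p r z - ipf q r z := by
    funext z; simp [ipf]; ring
  rw [ip, this, integral_sub (integrable_ipf hcirc p r) (integrable_ipf hcirc q r)]; rfl

include hcirc in
lemma ip_sub_right (p q r : Polynomial ℂ) :
    ip μ p (q - r) = ip μ p q - ip μ p r := by
  rw [ip_conj_symm, ip_sub_left hcirc, map_sub, ← ip_conj_symm, ← ip_conj_symm]

lemma span_phi (φ : ℕ → Polynomial ℂ) (hφdeg : ∀ j, (φ j).natDegree = j)
    (hne : ∀ j, (φ j).coeff j ≠ 0) :
    ∀ m (p : Polynomial ℂ), p.natDegree ≤ m →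
      ∃ a : ℕ → ℂ, p = ∑ j ∈ Finset.range (m + 1), Polynomial.C (a j) * φ j := by
  intro m
  induction m with
  | zero =>
    intro p hp
    have hp0 : p = Polynomial.C (p.coeff 0) := eq_C_of_natDegree_eq_zero (Nat.le_zero.mp hp)
    have hφ0 : φ 0 = Polynomial.C ((φ 0).coeff 0) := eq_C_of_natDegree_eq_zero (hφdeg 0)
    refine ⟨fun _ => p.coeff 0 / (φ 0).coeff 0, ?_⟩
    rw [Finset.sum_range_one]
    nth_rewrite 2 [hφ0]
    rw [← Polynomial.C_mul, div_mul_cancel₀ _ (hne 0)]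
    exact hp0
  | succ m ih =>
    intro p hp
    set c := p.coeff (m + 1) / (φ (m + 1)).coeff (m + 1) with hc
    set q := p - Polynomial.C c * φ (m + 1) with hq
    have hqd : q.natDegree ≤ m := by
      rw [Polynomial.natDegree_le_iff_coeff_eq_zero]
      intro N hN
      rcases Nat.lt_or_ge (m+1) N with h | h
      · have h1 : p.coeff N = 0 := by
          rw [Polynomial.natDegree_le_iff_coeff_eq_zero] at hp; exact hp N h
        have h2 : (φ (m+1)).coeff N = 0 := by
          have := hφdeg (m+1)
          exact Polynomial.coeff_eq_zero_of_natDegree_lt (by omega)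
        simp [hq, h1, h2]
      · have hN1 : N = m + 1 := by omega
        subst hN1
        simp only [hq, Polynomial.coeff_sub, Polynomial.coeff_C_mul, hc]
        rw [div_mul_cancel₀ _ (hne (m+1)), sub_self]
    obtain ⟨a, ha⟩ := ih q hqd
    refine ⟨fun j => if j = m + 1 then c else a j, ?_⟩
    have : ∑ j ∈ Finset.range (m + 1), Polynomial.C (if j = m + 1 then c else a j) * φ j
        = ∑ j ∈ Finset.range (m + 1), Polynomial.C (a j) * φ j := by
      refine Finset.sum_congr rfl fun j hj => ?_
      rw [Finset.mem_range] at hj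
      rw [if_neg (by omega)]
    rw [Finset.sum_range_succ, this]
    simp only [↓reduceIte]
    rw [← ha, hq]; ring

def pstar (p : Polynomial ℂ) : Polynomial ℂ :=
  ∑ k ∈ Finset.range (p.natDegree + 1),
    Polynomial.C ((starRingEnd ℂ) (p.coeff (p.natDegree - k))) * X ^ k

lemma pstar_natDegree_le (p : Polynomial ℂ) : (pstar p).natDegree ≤ p.natDegree := by
  refine le_trans (Polynomial.natDegree_sum_le _ _) ?_
  simp only [Finset.fold_max_le]
  refine ⟨Nat.zero_le _, fun k hk => ?_⟩
  refine le_trans (Polynomial.natDegree_mul_le) ?_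
  simp only [Polynomial.natDegree_C, Polynomial.natDegree_X_pow, zero_add]
  exact Nat.lt_succ_iff.mp (Finset.mem_range.mp hk)

lemma pstar_eval (p : Polynomial ℂ) {w : ℂ} (hw : Norm.norm w = 1) :
    (pstar p).eval w = w ^ p.natDegree * (starRingEnd ℂ) (p.eval w) := by
  have hww : w * (starRingEnd ℂ) w = 1 := by
    rw [Complex.mul_conj, ← Complex.sq_norm, hw]; norm_num
  set n := p.natDegree
  have hlhs : (pstar p).eval w = ∑ k ∈ Finset.range (n + 1),
      (starRingEnd ℂ) (p.coeff (n - k)) * w ^ k := by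
    simp [pstar, eval_finset_sum, n]
  rw [hlhs, ← Finset.sum_range_reflect]
  rw [Polynomial.eval_eq_sum_range, map_sum, Finset.mul_sum]
  refine Finset.sum_congr rfl fun k hk => ?_
  rw [Finset.mem_range] at hk
  have hk' : k ≤ n := Nat.lt_succ_iff.mp hk
  have h1 : n + 1 - 1 - k = n - k := by omega
  rw [h1, Nat.sub_sub_self hk']
  rw [map_mul, map_pow]
  have hwn : w ^ n = w ^ (n - k) * w ^ k := by rw [← pow_add]; congr 1; omega
  have hconjpow : w ^ k * ((starRingEnd ℂ) w) ^ k = 1 := by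
    rw [← mul_pow, hww, one_pow]
  linear_combination (-(starRingEnd ℂ) (p.coeff k) * ((starRingEnd ℂ) w) ^ k) * hwn
    - (starRingEnd ℂ) (p.coeff k) * w ^ (n - k) * hconjpow

include hcirc in
lemma ipXX (p q : Polynomial ℂ) : ip μ (X * p) (X * q) = ip μ p q := by
  rw [ip, ip]
  apply integral_congr_ae
  filter_upwards [hcirc] with z hz
  have hzz : z * (starRingEnd ℂ) z = 1 := by
    rw [Complex.mul_conj, ← Complex.sq_norm, hz]; norm_num
  simp only [ipf, eval_mul, eval_X, map_mul]
  linear_combination (p.eval z * (starRingEnd ℂ) (q.eval z)) * hzz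

include hcirc in
lemma ipSS (p : Polynomial ℂ) : ip μ (pstar p) (pstar p) = ip μ p p := by
  rw [ip, ip]
  apply integral_congr_ae
  filter_upwards [hcirc] with z hz
  have hzz : z * (starRingEnd ℂ) z = 1 := by
    rw [Complex.mul_conj, ← Complex.sq_norm, hz]; norm_num
  have hp : z ^ p.natDegree * ((starRingEnd ℂ) z) ^ p.natDegree = 1 := by
    rw [← mul_pow, hzz, one_pow]
  simp only [ipf, pstar_eval p hz, map_mul, map_pow, Complex.conj_conj]
  linear_combination (p.eval z * (starRingEnd ℂ) (p.eval z)) * hp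

include hcirc in
lemma ipf_pstar_abs (p : Polynomial ℂ) :
    ∀ᵐ z ∂μ, ‖ipf (pstar p) p z‖ = Complex.normSq (p.eval z) := by
  filter_upwards [hcirc] with z hz
  simp only [ipf, pstar_eval p hz, norm_mul, norm_pow, hz, one_pow, one_mul,
    Complex.norm_conj, ← Complex.sq_norm, sq]

include hcirc in
lemma integrable_normSq (p : Polynomial ℂ) :
    Integrable (fun z => Complex.normSq (p.eval z)) μ := by
  refine Integrable.mono' (integrable_const
    ((∑ k ∈ Finset.range (p.natDegree + 1), Norm.norm (p.coeff k)) ^ 2))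
    ((Complex.continuous_normSq.comp p.continuous).aestronglyMeasurable) ?_
  filter_upwards [hcirc] with z hz
  rw [Real.norm_eq_abs, abs_of_nonneg (Complex.normSq_nonneg _), ← Complex.sq_norm]
  exact pow_le_pow_left₀ (norm_nonneg _) (abs_eval_le p hz) 2

lemma ip_self_eq (p : Polynomial ℂ) :
    ip μ p p = ((∫ z, Complex.normSq (p.eval z) ∂μ : ℝ) : ℂ) := by
  have h : ipf p p = fun z => ((Complex.normSq (p.eval z) : ℝ) : ℂ) := by
    funext z; simp [ipf, Complex.mul_conj]
  rw [ip, h]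
  exact integral_ofReal (𝕜 := ℂ)

variable {φ : ℕ → Polynomial ℂ}

include hcirc in
lemma ip_phi_low (hφdeg : ∀ j, (φ j).natDegree = j)
    (hne : ∀ j, (φ j).coeff j ≠ 0)
    (hφon : ∀ i j, ip μ (φ i) (φ j) = if i = j then 1 else 0)
    {n : ℕ} {p : Polynomial ℂ} (hn : 1 ≤ n) (hp : p.natDegree ≤ n - 1) :
    ip μ (φ n) p = 0 := by
  obtain ⟨a, ha⟩ := span_phi φ hφdeg hne (n-1) p hp
  have hn1 : n - 1 + 1 = n := by omega
  rw [ip_conj_symm, ha, hn1, ip_sum_left hcirc]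
  have : ∀ j ∈ Finset.range n, a j * ip μ (φ j) (φ n) = 0 := by
    intro j hj
    rw [hφon j n, if_neg (by exact Nat.ne_of_lt (Finset.mem_range.mp hj)), mul_zero]
  rw [Finset.sum_congr rfl this, Finset.sum_const_zero, map_zero]

include hcirc in
lemma ipXS (hφdeg : ∀ j, (φ j).natDegree = j)
    (hne : ∀ j, (φ j).coeff j ≠ 0)
    (hφon : ∀ i j, ip μ (φ i) (φ j) = if i = j then 1 else 0)
    {j n : ℕ} (hj : j < n) :
    ip μ (X * φ j) (pstar (φ n)) = 0 := by
  have key : ip μ (X * φ j) (pstar (φ n))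
      = ip μ (φ n) (X ^ (n - 1 - j) * pstar (φ j)) := by
    rw [ip, ip]
    apply integral_congr_ae
    filter_upwards [hcirc] with z hz
    have hzz : z * (starRingEnd ℂ) z = 1 := by
      rw [Complex.mul_conj, ← Complex.sq_norm, hz]; norm_num
    simp only [ipf, eval_mul, eval_X, eval_pow, pstar_eval _ hz, map_mul, map_pow,
      Complex.conj_conj, hφdeg]
    have e1 : ((starRingEnd ℂ) z) ^ (n - 1 - j) * ((starRingEnd ℂ) z) ^ j
        = ((starRingEnd ℂ) z) ^ (n - 1) := by rw [← pow_add]; congr 1; omega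
    have e2 : z * ((starRingEnd ℂ) z) ^ n = ((starRingEnd ℂ) z) ^ (n - 1) := by
      have hn' : ((starRingEnd ℂ) z) ^ n = ((starRingEnd ℂ) z) ^ (n - 1) * (starRingEnd ℂ) z := by
        rw [← pow_succ]; congr 1; omega
      rw [hn', show z * (((starRingEnd ℂ) z) ^ (n-1) * (starRingEnd ℂ) z)
          = (z * (starRingEnd ℂ) z) * ((starRingEnd ℂ) z) ^ (n-1) from by ring, hzz, one_mul]
    calc z * (φ j).eval z * (((starRingEnd ℂ) z) ^ n * (φ n).eval z)
        = (z * ((starRingEnd ℂ) z) ^ n) * ((φ j).eval z * (φ n).eval z) := by ring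
      _ = ((starRingEnd ℂ) z) ^ (n-1) * ((φ j).eval z * (φ n).eval z) := by rw [e2]
      _ = (((starRingEnd ℂ) z) ^ (n - 1 - j) * ((starRingEnd ℂ) z) ^ j)
            * ((φ j).eval z * (φ n).eval z) := by rw [e1]
      _ = (φ n).eval z * (((starRingEnd ℂ) z) ^ (n - 1 - j)
            * (((starRingEnd ℂ) z) ^ j * (φ j).eval z)) := by ring
  rw [key]
  refine ip_phi_low hcirc hφdeg hne hφon (by omega) ?_
  refine le_trans Polynomial.natDegree_mul_le ?_
  have h1 := pstar_natDegree_le (φ j)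
  rw [hφdeg j] at h1
  simp only [Polynomial.natDegree_X_pow]
  omega

include hcirc in
lemma kernel_cd (hφdeg : ∀ j, (φ j).natDegree = j)
    (hne : ∀ j, (φ j).coeff j ≠ 0)
    (hφon : ∀ i j, ip μ (φ i) (φ j) = if i = j then 1 else 0)
    {n : ℕ} (hn : 1 ≤ n) (z₀ : ℂ) :
    (1 - Polynomial.C ((starRingEnd ℂ) z₀) * X) *
      (∑ j ∈ Finset.range n, Polynomial.C ((starRingEnd ℂ) ((φ j).eval z₀)) * φ j)
    = Polynomial.C ((starRingEnd ℂ) ((pstar (φ n)).eval z₀)) * pstar (φ n)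
      - Polynomial.C ((starRingEnd ℂ) ((φ n).eval z₀)) * φ n := by
  classical
  set f : ℕ → Polynomial ℂ := fun i => if i < n then X * φ i else pstar (φ n) with hf
  have hfdeg : ∀ i, (f i).natDegree ≤ n := by
    intro i
    by_cases hi : i < n
    · simp only [hf, if_pos hi]
      refine le_trans Polynomial.natDegree_mul_le ?_
      rw [Polynomial.natDegree_X, hφdeg i]; omega
    · simp only [hf, if_neg hi]
      exact le_trans (pstar_natDegree_le _) (le_of_eq (hφdeg n))
  choose u hu using fun i => span_phi φ hφdeg hne n (f i) (hfdeg i)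
  have hforth : ∀ i k, i < n + 1 → k < n + 1 →
      ip μ (f i) (f k) = if i = k then 1 else 0 := by
    intro i k hi hk
    by_cases h1 : i < n
    · by_cases h2 : k < n
      · simp only [hf, if_pos h1, if_pos h2]
        rw [ipXX hcirc, hφon i k]
      · have hkn : k = n := by omega
        rw [hkn]
        simp only [hf, if_pos h1, if_neg (lt_irrefl n)]
        rw [ipXS hcirc hφdeg hne hφon h1, if_neg (by omega)]
    · have hin : i = n := by omega
      rw [hin]
      by_cases h2 : k < n
      · simp only [hf, if_neg (lt_irrefl n), if_pos h2]
        rw [ip_conj_symm, ipXS hcirc hφdeg hne hφon h2, map_zero, if_neg (by omega)]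
      · have hkn : k = n := by omega
        rw [hkn]
        simp only [hf, if_neg (lt_irrefl n)]
        rw [ipSS hcirc, hφon n n]
        simp
  have hgram : ∀ i k, i < n + 1 → k < n + 1 →
      ∑ j ∈ Finset.range (n + 1), u i j * (starRingEnd ℂ) (u k j)
        = if i = k then 1 else 0 := by
    intro i k hi hk
    have h2 : ∀ j ∈ Finset.range (n + 1), ip μ (φ j) (f k) = (starRingEnd ℂ) (u k j) := by
      intro j hj
      rw [ip_conj_symm]
      congr 1
      rw [hu k, ip_sum_left hcirc]
      have : ∀ l ∈ Finset.range (n + 1),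
          u k l * ip μ (φ l) (φ j) = if l = j then u k l else 0 := by
        intro l hl
        rw [hφon l j]
        by_cases h : l = j <;> simp [h]
      rw [Finset.sum_congr rfl this, Finset.sum_ite_eq' (Finset.range (n+1)) j (u k),
        if_pos hj]
    calc ∑ j ∈ Finset.range (n + 1), u i j * (starRingEnd ℂ) (u k j)
        = ∑ j ∈ Finset.range (n + 1), u i j * ip μ (φ j) (f k) :=
          Finset.sum_congr rfl fun j hj => by rw [h2 j hj]
      _ = ip μ (f i) (f k) := by rw [hu i, ip_sum_left hcirc]
      _ = if i = k then 1 else 0 := hforth i k hi hk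
  set U : Matrix (Fin (n + 1)) (Fin (n + 1)) ℂ := Matrix.of fun i j => u i j with hU
  have hUU : U * U.conjTranspose = 1 := by
    ext i k
    rw [Matrix.mul_apply, Matrix.one_apply]
    simp only [Matrix.conjTranspose_apply, hU, Matrix.of_apply, RCLike.star_def]
    rw [Fin.sum_univ_eq_sum_range (fun j => u i j * (starRingEnd ℂ) (u k j)) (n+1)]
    rw [hgram i k i.isLt k.isLt]
    by_cases h : (i : ℕ) = (k : ℕ)
    · rw [if_pos h, if_pos (Fin.ext h)]
    · rw [if_neg h, if_neg (fun hh => h (congrArg Fin.val hh))]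
  have hVU := mul_eq_one_comm.mp hUU
  have hcol : ∀ j l, j < n + 1 → l < n + 1 →
      ∑ i ∈ Finset.range (n + 1), (starRingEnd ℂ) (u i j) * u i l
        = if j = l then 1 else 0 := by
    intro j l hj hl
    have := congrFun (congrFun hVU ⟨j, hj⟩) ⟨l, hl⟩
    rw [Matrix.mul_apply, Matrix.one_apply] at this
    simp only [Matrix.conjTranspose_apply, hU, Matrix.of_apply, RCLike.star_def] at this
    rw [Fin.sum_univ_eq_sum_range (fun i => (starRingEnd ℂ) (u i j) * u i l) (n+1)] at this
    rw [this]
    by_cases h : j = l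
    · rw [if_pos h, if_pos (Fin.ext h)]
    · rw [if_neg (fun hh => h (congrArg Fin.val hh)), if_neg h]
  have hker : ∑ i ∈ Finset.range (n + 1), Polynomial.C ((starRingEnd ℂ) ((f i).eval z₀)) * f i
      = ∑ j ∈ Finset.range (n + 1), Polynomial.C ((starRingEnd ℂ) ((φ j).eval z₀)) * φ j := by
    have hstep : ∀ i ∈ Finset.range (n + 1),
        Polynomial.C ((starRingEnd ℂ) ((f i).eval z₀)) * f i
        = ∑ j ∈ Finset.range (n + 1),
            Polynomial.C ((∑ l ∈ Finset.range (n + 1),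
              (starRingEnd ℂ) (u i l * (φ l).eval z₀)) * u i j) * φ j := by
      intro i hi
      rw [hu i, eval_finset_sum]
      simp only [eval_mul, eval_C]
      rw [map_sum, Finset.mul_sum]
      refine Finset.sum_congr rfl fun j hj => ?_
      rw [Polynomial.C_mul]
      ring
    rw [Finset.sum_congr rfl hstep, Finset.sum_comm]
    refine Finset.sum_congr rfl fun j hj => ?_
    rw [← Finset.sum_mul]
    congr 1
    rw [← map_sum]
    congr 1
    have h1 : ∀ i ∈ Finset.range (n + 1),
        (∑ l ∈ Finset.range (n + 1), (starRingEnd ℂ) (u i l * (φ l).eval z₀)) * u i j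
        = ∑ l ∈ Finset.range (n + 1),
            (starRingEnd ℂ) ((φ l).eval z₀) * ((starRingEnd ℂ) (u i l) * u i j) := by
      intro i hi
      rw [Finset.sum_mul]
      refine Finset.sum_congr rfl fun l hl => ?_
      rw [map_mul]; ring
    rw [Finset.sum_congr rfl h1, Finset.sum_comm]
    have h2 : ∀ l ∈ Finset.range (n + 1),
        ∑ i ∈ Finset.range (n + 1),
            (starRingEnd ℂ) ((φ l).eval z₀) * ((starRingEnd ℂ) (u i l) * u i j)
        = if l = j then (starRingEnd ℂ) ((φ l).eval z₀) else 0 := by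
      intro l hl
      rw [← Finset.mul_sum, hcol l j (Finset.mem_range.mp hl) (Finset.mem_range.mp hj)]
      by_cases h : l = j <;> simp [h]
    rw [Finset.sum_congr rfl h2,
      Finset.sum_ite_eq' (Finset.range (n+1)) j (fun l => (starRingEnd ℂ) ((φ l).eval z₀)),
      if_pos hj]
  have hsplit : ∑ i ∈ Finset.range (n + 1), Polynomial.C ((starRingEnd ℂ) ((f i).eval z₀)) * f i
      = Polynomial.C ((starRingEnd ℂ) z₀) * X *
          (∑ j ∈ Finset.range n, Polynomial.C ((starRingEnd ℂ) ((φ j).eval z₀)) * φ j)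
        + Polynomial.C ((starRingEnd ℂ) ((pstar (φ n)).eval z₀)) * pstar (φ n) := by
    rw [Finset.sum_range_succ]
    have hfn : f n = pstar (φ n) := by simp only [hf, if_neg (lt_irrefl n)]
    have hrest : ∀ i ∈ Finset.range n,
        Polynomial.C ((starRingEnd ℂ) ((f i).eval z₀)) * f i
        = Polynomial.C ((starRingEnd ℂ) z₀) * X *
            (Polynomial.C ((starRingEnd ℂ) ((φ i).eval z₀)) * φ i) := by
      intro i hi
      have hfi : f i = X * φ i := by simp only [hf, if_pos (Finset.mem_range.mp hi)]
      rw [hfi]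
      simp only [eval_mul, eval_X, map_mul, Polynomial.C_mul]
      ring
    rw [Finset.sum_congr rfl hrest, hfn, ← Finset.mul_sum]
  have heq : Polynomial.C ((starRingEnd ℂ) z₀) * X *
        (∑ j ∈ Finset.range n, Polynomial.C ((starRingEnd ℂ) ((φ j).eval z₀)) * φ j)
      + Polynomial.C ((starRingEnd ℂ) ((pstar (φ n)).eval z₀)) * pstar (φ n)
      = (∑ j ∈ Finset.range n, Polynomial.C ((starRingEnd ℂ) ((φ j).eval z₀)) * φ j)
        + Polynomial.C ((starRingEnd ℂ) ((φ n).eval z₀)) * φ n := by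
    rw [← hsplit, hker, Finset.sum_range_succ]
  linear_combination -heq

include hcirc in
lemma lemmaA (hsupp : ∀ᵐ z ∂μ, z ∈ msupport μ)
    (hφdeg : ∀ j, (φ j).natDegree = j)
    (hne : ∀ j, (φ j).coeff j ≠ 0)
    (hφon : ∀ i j, ip μ (φ i) (φ j) = if i = j then 1 else 0)
    {n : ℕ} (hn : 1 ≤ n) {z₀ : ℂ} (hz₀ : Norm.norm z₀ = 1) :
    (Metric.infDist z₀ (msupport μ)) ^ 2
        * ∑ j ∈ Finset.range n, Norm.norm ((φ j).eval z₀) ^ 2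
      ≤ 4 * Norm.norm ((φ n).eval z₀) ^ 2 := by
  classical
  set δ := Metric.infDist z₀ (msupport μ) with hδdef
  have hδ0 : 0 ≤ δ := Metric.infDist_nonneg
  set k : Polynomial ℂ :=
    ∑ j ∈ Finset.range n, Polynomial.C ((starRingEnd ℂ) ((φ j).eval z₀)) * φ j with hk
  set a := Norm.norm ((φ n).eval z₀) with ha
  -- ip (φ j) k = (φ j).eval z₀ for j < n
  have hipk : ∀ j ∈ Finset.range n, ip μ (φ j) k = (φ j).eval z₀ := by
    intro j hj
    rw [ip_conj_symm, hk, ip_sum_left hcirc]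
    have h1 : ∀ l ∈ Finset.range n, (starRingEnd ℂ) ((φ l).eval z₀) * ip μ (φ l) (φ j)
        = if l = j then (starRingEnd ℂ) ((φ l).eval z₀) else 0 := by
      intro l hl
      rw [hφon l j]
      by_cases h : l = j <;> simp [h]
    rw [Finset.sum_congr rfl h1,
      Finset.sum_ite_eq' (Finset.range n) j (fun l => (starRingEnd ℂ) ((φ l).eval z₀)),
      if_pos hj, Complex.conj_conj]
  have hipkk : ip μ k k
      = ((∑ j ∈ Finset.range n, Norm.norm ((φ j).eval z₀) ^ 2 : ℝ) : ℂ) := by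
    rw [hk, ip_sum_left hcirc]
    rw [Complex.ofReal_sum]
    refine Finset.sum_congr rfl fun j hj => ?_
    rw [← hk, hipk j hj]
    rw [mul_comm, Complex.mul_conj, Complex.sq_norm]
  have hKint : ∫ z, Complex.normSq (k.eval z) ∂μ
      = ∑ j ∈ Finset.range n, Norm.norm ((φ j).eval z₀) ^ 2 := by
    have := (ip_self_eq k).symm.trans hipkk
    exact_mod_cast this
  -- lower bound
  have hlow : δ ^ 2 * ∫ z, Complex.normSq (k.eval z) ∂μ
      ≤ ∫ z, Complex.normSq
          (((1 - Polynomial.C ((starRingEnd ℂ) z₀) * X) * k).eval z) ∂μ := by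
    rw [← integral_const_mul]
    refine integral_mono_ae ((integrable_normSq hcirc k).const_mul _)
      (integrable_normSq hcirc _) ?_
    filter_upwards [hsupp] with z hzsup
    have hfac : (1 : ℂ) - (starRingEnd ℂ) z₀ * z = (starRingEnd ℂ) z₀ * (z₀ - z) := by
      have hzz0 : (starRingEnd ℂ) z₀ * z₀ = 1 := by
        rw [mul_comm, Complex.mul_conj, ← Complex.sq_norm, hz₀]; norm_num
      linear_combination -hzz0
    have habs : δ ≤ Norm.norm (1 - (starRingEnd ℂ) z₀ * z) := by
      rw [hfac, norm_mul, Complex.norm_conj, hz₀, one_mul, ← Complex.dist_eq]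
      exact Metric.infDist_le_dist_of_mem hzsup
    have h2 : δ ^ 2 ≤ Complex.normSq (1 - (starRingEnd ℂ) z₀ * z) := by
      rw [← Complex.sq_norm]
      exact pow_le_pow_left₀ hδ0 habs 2
    rw [Polynomial.eval_mul, Complex.normSq_mul]
    have heval : ((1 : Polynomial ℂ) - Polynomial.C ((starRingEnd ℂ) z₀) * X).eval z
        = 1 - (starRingEnd ℂ) z₀ * z := by simp
    rw [heval]
    exact mul_le_mul_of_nonneg_right h2 (Complex.normSq_nonneg _)
  -- upper bound via CD
  have hCD := kernel_cd hcirc hφdeg hne hφon hn z₀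
  rw [← hk] at hCD
  set A := (starRingEnd ℂ) ((pstar (φ n)).eval z₀) with hA
  set B := (starRingEnd ℂ) ((φ n).eval z₀) with hB
  set g : Polynomial ℂ := Polynomial.C A * pstar (φ n) - Polynomial.C B * φ n with hg
  have habsB : Norm.norm B = a := by rw [hB, Complex.norm_conj]
  have habsA : Norm.norm A = a := by
    rw [hA, Complex.norm_conj, pstar_eval (φ n) hz₀, norm_mul, norm_pow, hz₀, one_pow, one_mul,
      Complex.norm_conj]
  set t := ip μ (pstar (φ n)) (φ n) with ht
  have habst : Norm.norm t ≤ 1 := by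
    have h1 : Norm.norm t ≤ ∫ z, ‖ipf (pstar (φ n)) (φ n) z‖ ∂μ := by
      rw [ht, ip]
      exact norm_integral_le_integral_norm _
    have h2 : ∫ z, ‖ipf (pstar (φ n)) (φ n) z‖ ∂μ
        = ∫ z, Complex.normSq ((φ n).eval z) ∂μ :=
      integral_congr_ae (ipf_pstar_abs hcirc (φ n))
    have h3 : ∫ z, Complex.normSq ((φ n).eval z) ∂μ = 1 := by
      have h4 := (ip_self_eq (φ n)).symm.trans (by rw [hφon n n, if_pos rfl] :
        ip μ (φ n) (φ n) = (1 : ℂ))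
      exact_mod_cast h4
    rw [h2, h3] at h1; exact h1
  have hipgg : ip μ g g
      = ((a ^ 2 + a ^ 2 - 2 * (A * (starRingEnd ℂ) B * t).re : ℝ) : ℂ) := by
    have h5 : ip μ (φ n) (pstar (φ n)) = (starRingEnd ℂ) t := by rw [ht, ← ip_conj_symm]
    have hSS : ip μ (pstar (φ n)) (pstar (φ n)) = 1 := by
      rw [ipSS hcirc, hφon n n, if_pos rfl]
    have hNN : ip μ (φ n) (φ n) = 1 := by rw [hφon n n, if_pos rfl]
    rw [hg]
    simp only [ip_sub_left hcirc, ip_sub_right hcirc, ip_smul_left, ip_smul_right]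
    rw [hSS, hNN, ← ht, h5]
    have hAA : A * (starRingEnd ℂ) A = ((a ^ 2 : ℝ) : ℂ) := by
      rw [Complex.mul_conj, ← habsA, Complex.sq_norm]
    have hBB : B * (starRingEnd ℂ) B = ((a ^ 2 : ℝ) : ℂ) := by
      rw [Complex.mul_conj, ← habsB, Complex.sq_norm]
    have hcre : A * (starRingEnd ℂ) B * t
          + (starRingEnd ℂ) A * (B * (starRingEnd ℂ) t)
        = ((2 * (A * (starRingEnd ℂ) B * t).re : ℝ) : ℂ) := by
      have h := Complex.add_conj (A * (starRingEnd ℂ) B * t)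
      simp only [map_mul, Complex.conj_conj] at h
      push_cast at h ⊢
      linear_combination h
    push_cast
    push_cast at hAA hBB hcre
    linear_combination hAA + hBB - hcre
  have hupint : ∫ z, Complex.normSq (g.eval z) ∂μ
      = a ^ 2 + a ^ 2 - 2 * (A * (starRingEnd ℂ) B * t).re := by
    have := (ip_self_eq g).symm.trans hipgg
    exact_mod_cast this
  have hre : -(a ^ 2) ≤ (A * (starRingEnd ℂ) B * t).re := by
    have h1 : |(A * (starRingEnd ℂ) B * t).re| ≤ Norm.norm (A * (starRingEnd ℂ) B * t) :=
      Complex.abs_re_le_norm _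
    have h2 : Norm.norm (A * (starRingEnd ℂ) B * t) ≤ a ^ 2 := by
      rw [norm_mul, norm_mul, habsA, Complex.norm_conj, habsB]
      calc a * a * Norm.norm t ≤ a * a * 1 :=
            mul_le_mul_of_nonneg_left habst (by positivity)
        _ = a ^ 2 := by ring
    have := abs_le.mp (le_trans h1 h2)
    linarith [this.1]
  have hup : ∫ z, Complex.normSq (g.eval z) ∂μ ≤ 4 * a ^ 2 := by
    rw [hupint]; linarith
  rw [← hKint]
  calc δ ^ 2 * ∫ z, Complex.normSq (k.eval z) ∂μ
      ≤ ∫ z, Complex.normSq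
          (((1 - Polynomial.C ((starRingEnd ℂ) z₀) * X) * k).eval z) ∂μ := hlow
    _ = ∫ z, Complex.normSq (g.eval z) ∂μ := by rw [hCD]
    _ ≤ 4 * a ^ 2 := hup

end HNAux
end HNAux

/-- Lemma 1: if `z₀ ∈ ∂𝔻`, `δ = dist(z₀, supp μ) > 0`, `lam ∈ ∂𝔻`, `z₀ ≠ lam`, and
`|h_{n+1}(z₀)| ≤ |h_n(z₀)|`, then
`|h_n(z₀)| / K_{n-1}(z₀,z₀)^{1/2} ≥ (1/4)|φ_n(lam)| |z₀ - lam| δ`,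
where `h_m(z) = (1 - conj(lam) z) K_{m-1}(z, lam)`. -/
theorem hn_lower_bound_at_z0
    (μ : Measure ℂ) [IsProbabilityMeasure μ]
    (hcirc : ∀ᵐ z ∂μ, Norm.norm z = 1)
    (hinf : (msupport μ).Infinite)
    (φ : ℕ → Polynomial ℂ)
    (hφdeg : ∀ j, (φ j).natDegree = j)
    (hφon : ∀ i j, ∫ z, (φ i).eval z * (starRingEnd ℂ) ((φ j).eval z) ∂μ
      = if i = j then 1 else 0)
    (lam : ℂ) (hlam : Norm.norm lam = 1)
    (z₀ : ℂ) (hz₀ : Norm.norm z₀ = 1) (hz₀lam : z₀ ≠ lam)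
    (hδ : 0 < Metric.infDist z₀ (msupport μ))
    (n : ℕ) (hn : 1 ≤ n)
    (hcomp :
      Norm.norm ((1 - (starRingEnd ℂ) lam * z₀)
          * ∑ j ∈ Finset.range (n + 1), (φ j).eval z₀ * (starRingEnd ℂ) ((φ j).eval lam))
        ≤ Norm.norm ((1 - (starRingEnd ℂ) lam * z₀)
          * ∑ j ∈ Finset.range n, (φ j).eval z₀ * (starRingEnd ℂ) ((φ j).eval lam))) :
    (1 / 4) * Norm.norm ((φ n).eval lam) * Norm.norm (z₀ - lam)
        * Metric.infDist z₀ (msupport μ)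
      ≤ Norm.norm ((1 - (starRingEnd ℂ) lam * z₀)
            * ∑ j ∈ Finset.range n, (φ j).eval z₀ * (starRingEnd ℂ) ((φ j).eval lam))
        / Real.sqrt (∑ j ∈ Finset.range n, Norm.norm ((φ j).eval z₀) ^ 2) := by
  classical
  have hφon' : ∀ i j, HNAux.ip μ (φ i) (φ j) = if i = j then 1 else 0 := hφon
  have hne : ∀ j, (φ j).coeff j ≠ 0 := by
    intro j hc
    have h0 : φ j = 0 := Polynomial.leadingCoeff_eq_zero.mp
      (by rw [Polynomial.leadingCoeff, hφdeg j]; exact hc)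
    have h1 := hφon' j j
    rw [if_pos rfl, h0] at h1
    simp [HNAux.ip, HNAux.ipf] at h1
  have hsupp : ∀ᵐ z ∂μ, z ∈ msupport μ := by
    rw [MeasureTheory.ae_iff]
    have : μ ((msupport μ)ᶜ) = 0 := by
      refine measure_null_of_locally_null _ (fun x hx => ?_)
      simp only [msupport, Set.mem_compl_iff, Set.mem_setOf_eq, not_forall] at hx
      obtain ⟨ε, hε, h0⟩ := hx
      exact ⟨Metric.ball x ε, mem_nhdsWithin_of_mem_nhds (Metric.ball_mem_nhds x hε),
        not_not.mp h0⟩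
    exact this
  set δ := Metric.infDist z₀ (msupport μ) with hδdef
  have hδ0 : 0 ≤ δ := Metric.infDist_nonneg
  set a := Norm.norm ((φ n).eval z₀) with ha
  set b := Norm.norm ((φ n).eval lam) with hb
  set d := Norm.norm (z₀ - lam) with hd
  set K := ∑ j ∈ Finset.range n, Norm.norm ((φ j).eval z₀) ^ 2 with hK
  set H := Norm.norm ((1 - (starRingEnd ℂ) lam * z₀)
      * ∑ j ∈ Finset.range n, (φ j).eval z₀ * (starRingEnd ℂ) ((φ j).eval lam)) with hH
  have hb0 : 0 ≤ b := norm_nonneg _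
  have hd0 : 0 ≤ d := norm_nonneg _
  have ha0 : 0 ≤ a := norm_nonneg _
  -- |1 - conj lam * z₀| = d
  have habs1 : Norm.norm (1 - (starRingEnd ℂ) lam * z₀) = d := by
    have hfac : (1 : ℂ) - (starRingEnd ℂ) lam * z₀ = (starRingEnd ℂ) lam * (lam - z₀) := by
      have hll : (starRingEnd ℂ) lam * lam = 1 := by
        rw [mul_comm, Complex.mul_conj, ← Complex.sq_norm, hlam]; norm_num
      linear_combination -hll
    rw [hfac, norm_mul, Complex.norm_conj, hlam, one_mul, hd, norm_sub_rev]
  -- step 1: a * b * d ≤ 2 * H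
  have hw1 : a * b * d ≤ 2 * H := by
    have hdiff : (1 - (starRingEnd ℂ) lam * z₀)
          * ∑ j ∈ Finset.range (n + 1), (φ j).eval z₀ * (starRingEnd ℂ) ((φ j).eval lam)
        - (1 - (starRingEnd ℂ) lam * z₀)
          * ∑ j ∈ Finset.range n, (φ j).eval z₀ * (starRingEnd ℂ) ((φ j).eval lam)
        = (1 - (starRingEnd ℂ) lam * z₀)
          * ((φ n).eval z₀ * (starRingEnd ℂ) ((φ n).eval lam)) := by
      rw [Finset.sum_range_succ]; ring
    have h2 : Norm.norm ((1 - (starRingEnd ℂ) lam * z₀)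
          * ((φ n).eval z₀ * (starRingEnd ℂ) ((φ n).eval lam))) ≤ 2 * H := by
      rw [← hdiff]
      refine le_trans (norm_sub_le _ _) ?_
      rw [← hH]
      linarith [hcomp]
    rw [norm_mul, norm_mul, habs1, Complex.norm_conj, ← ha, ← hb] at h2
    calc a * b * d = d * (a * b) := by ring
      _ ≤ 2 * H := h2
  -- K ≥ 1
  have hK1 : (1 : ℝ) ≤ K := by
    have hphi0 : φ 0 = Polynomial.C ((φ 0).coeff 0) := eq_C_of_natDegree_eq_zero (hφdeg 0)
    have h1 := hφon' 0 0
    rw [if_pos rfl] at h1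
    have h2 : HNAux.ip μ (φ 0) (φ 0)
        = ((Complex.normSq ((φ 0).coeff 0) : ℝ) : ℂ) := by
      rw [HNAux.ip]
      have : HNAux.ipf (φ 0) (φ 0) = fun _ => ((Complex.normSq ((φ 0).coeff 0) : ℝ) : ℂ) := by
        funext z
        rw [HNAux.ipf]
        conv_lhs => rw [hphi0]
        simp [Complex.mul_conj]
      rw [this, integral_const]
      simp
    rw [h2] at h1
    have h3 : Complex.normSq ((φ 0).coeff 0) = 1 := by exact_mod_cast h1
    have hterm : Norm.norm ((φ 0).eval z₀) ^ 2 = 1 := by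
      nth_rewrite 1 [hphi0]
      rw [Polynomial.eval_C, Complex.sq_norm, h3]
    have hsum := Finset.single_le_sum (f := fun j => Norm.norm ((φ j).eval z₀) ^ 2)
      (fun j _ => by positivity) (Finset.mem_range.mpr (show 0 < n by omega))
    replace hsum : Norm.norm ((φ 0).eval z₀) ^ 2 ≤ K := hsum
    rw [hterm] at hsum
    exact hsum
  have hsqK : (1 : ℝ) ≤ Real.sqrt K := by
    rw [show (1:ℝ) = Real.sqrt 1 from (Real.sqrt_one).symm]
    exact Real.sqrt_le_sqrt hK1
  have hsqK0 : 0 < Real.sqrt K := lt_of_lt_of_le one_pos hsqK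
  have hK0 : 0 ≤ K := le_trans zero_le_one hK1
  clear_value δ a b d K H
  -- Lemma A
  have hA := HNAux.lemmaA hcirc hsupp hφdeg hne hφon' hn hz₀
  rw [← hδdef, ← hK, ← ha] at hA
  have hw2 : δ * Real.sqrt K ≤ 2 * a := by
    have h1 : (δ * Real.sqrt K) ^ 2 = δ ^ 2 * K := by
      rw [mul_pow, Real.sq_sqrt hK0]
    calc δ * Real.sqrt K = Real.sqrt ((δ * Real.sqrt K) ^ 2) :=
          (Real.sqrt_sq (by positivity)).symm
      _ = Real.sqrt (δ ^ 2 * K) := by rw [h1]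
      _ ≤ Real.sqrt (4 * a ^ 2) := Real.sqrt_le_sqrt hA
      _ = 2 * a := by
          rw [show (4:ℝ) * a ^ 2 = (2*a)^2 by ring, Real.sqrt_sq (by positivity)]
  rw [le_div_iff₀ hsqK0]
  have h3 : b * d * (δ * Real.sqrt K) ≤ b * d * (2 * a) :=
    mul_le_mul_of_nonneg_left hw2 (by positivity)
  nlinarith [h3, hw1, hb0, hd0, Real.sqrt_nonneg K]
end

section
/- Let τ be a zero of h_n with τ ≠ λ, let z₀ ∈ ℂ, and let T = dist(τ, supp μ). Then |z₀ − τ| ≥ T·|h_n(z₀)| / (K_{n-1}(z₀, z₀)^{1/2} · ‖h_n‖_{L²(dμ)}). -/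
open MeasureTheory Polynomial

lemma ae_mem_msupport (μ : Measure ℂ) : ∀ᵐ z ∂μ, z ∈ msupport μ := by
  rw [MeasureTheory.ae_iff]
  refine measure_null_of_locally_null _ fun x hx => ?_
  simp only [msupport, Set.mem_setOf_eq, not_forall] at hx
  obtain ⟨ε, hε, hμ⟩ := hx
  simp only [not_not, ne_eq] at hμ
  exact ⟨Metric.ball x ε, Filter.mem_inf_of_left (Metric.ball_mem_nhds x hε), hμ⟩

lemma eval_abs_bound (p : Polynomial ℂ) :
    ∃ C : ℝ, 0 ≤ C ∧ ∀ z : ℂ, ‖z‖ = 1 → ‖p.eval z‖ ≤ C := by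
  refine ⟨∑ i ∈ Finset.range (p.natDegree + 1), ‖p.coeff i‖,
    Finset.sum_nonneg fun i _ => norm_nonneg _, fun z hz => ?_⟩
  rw [Polynomial.eval_eq_sum_range]
  refine (norm_sum_le _ _).trans (Finset.sum_le_sum fun i _ => ?_)
  rw [norm_mul, norm_pow]
  have : ‖z‖ = 1 := hz
  simp [this]

lemma integrable_of_circle_bound {E : Type*} [NormedAddCommGroup E]
    (μ : Measure ℂ) [IsFiniteMeasure μ] (hcirc : ∀ᵐ z ∂μ, ‖z‖ = 1)
    (f : ℂ → E) (hf : Continuous f) (C : ℝ)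
    (hC : ∀ z : ℂ, ‖z‖ = 1 → ‖f z‖ ≤ C) : Integrable f μ := by
  refine ⟨hf.aestronglyMeasurable, HasFiniteIntegral.of_bounded (C := C) ?_⟩
  filter_upwards [hcirc] with z hz using hC z hz

lemma integrable_eval_mul (μ : Measure ℂ) [IsFiniteMeasure μ]
    (hcirc : ∀ᵐ z ∂μ, ‖z‖ = 1) (p q : Polynomial ℂ) :
    Integrable (fun z => p.eval z * (starRingEnd ℂ) (q.eval z)) μ := by
  obtain ⟨Cp, hCp0, hCp⟩ := eval_abs_bound p
  obtain ⟨Cq, hCq0, hCq⟩ := eval_abs_bound q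
  refine integrable_of_circle_bound μ hcirc _ ?_ (Cp * Cq) fun z hz => ?_
  · exact (p.continuous_aeval).mul (Complex.continuous_conj.comp q.continuous_aeval)
  · rw [norm_mul, RCLike.norm_conj]
    exact mul_le_mul (hCp z hz) (hCq z hz) (norm_nonneg _) hCp0

lemma integrable_eval_sq (μ : Measure ℂ) [IsFiniteMeasure μ]
    (hcirc : ∀ᵐ z ∂μ, ‖z‖ = 1) (p : Polynomial ℂ) :
    Integrable (fun z => ‖p.eval z‖ ^ 2) μ := by
  obtain ⟨Cp, hCp0, hCp⟩ := eval_abs_bound p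
  refine integrable_of_circle_bound μ hcirc _ ?_ (Cp ^ 2) fun z hz => ?_
  · exact (p.continuous_aeval.norm).pow 2
  · rw [Real.norm_eq_abs, abs_of_nonneg (by positivity)]
    exact pow_le_pow_left₀ (norm_nonneg _) (hCp z hz) 2

lemma sum_mul_le_sqrt_mul_sqrt (s : Finset ℕ) (f g : ℕ → ℝ) :
    ∑ i ∈ s, f i * g i ≤ Real.sqrt (∑ i ∈ s, f i ^ 2) * Real.sqrt (∑ i ∈ s, g i ^ 2) := by
  have h := Finset.sum_mul_sq_le_sq_mul_sq s f g
  calc ∑ i ∈ s, f i * g i ≤ |∑ i ∈ s, f i * g i| := le_abs_self _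
    _ = Real.sqrt ((∑ i ∈ s, f i * g i) ^ 2) := (Real.sqrt_sq_eq_abs _).symm
    _ ≤ Real.sqrt ((∑ i ∈ s, f i ^ 2) * ∑ i ∈ s, g i ^ 2) := Real.sqrt_le_sqrt h
    _ = _ := Real.sqrt_mul (Finset.sum_nonneg fun i _ => sq_nonneg _) _

lemma span_poly (φ : ℕ → Polynomial ℂ) (hφ0 : ∀ j, φ j ≠ 0)
    (hφdeg : ∀ j, (φ j).natDegree = j) (n : ℕ) :
    ∀ k, k ≤ n → ∀ p : Polynomial ℂ, p.natDegree < k →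
      p ∈ Submodule.span ℂ (Set.range fun j : Fin n => φ j) := by
  intro k
  induction k with
  | zero => intro _ p hp; exact absurd hp (Nat.not_lt_zero _)
  | succ k ih =>
    intro hk p hp
    by_cases hp0 : p = 0
    · simp [hp0]
    rcases Nat.lt_succ_iff_lt_or_eq.mp hp with h | h
    · exact ih (le_of_lt hk) p h
    · have hkn : k < n := hk
      have hlead : (φ k).coeff k ≠ 0 := by
        have h1 : (φ k).coeff k = (φ k).leadingCoeff := by
          rw [Polynomial.leadingCoeff, hφdeg k]
        rw [h1]
        exact Polynomial.leadingCoeff_ne_zero.mpr (hφ0 k)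
      set c : ℂ := p.coeff k / (φ k).coeff k with hc
      have hmem : φ k ∈ Submodule.span ℂ (Set.range fun j : Fin n => φ j) :=
        Submodule.subset_span ⟨⟨k, hkn⟩, rfl⟩
      set q : Polynomial ℂ := p - Polynomial.C c * φ k with hq
      have hpq : p = q + c • φ k := by
        rw [hq, Polynomial.smul_eq_C_mul]; ring
      have hqk : q.coeff k = 0 := by
        simp only [hq, Polynomial.coeff_sub, Polynomial.coeff_C_mul, hc]
        field_simp
        ring
      by_cases hq0 : q = 0
      · rw [hpq, hq0, zero_add]
        exact Submodule.smul_mem _ _ hmem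
      have hqdeg : q.natDegree < k := by
        have hle : q.natDegree ≤ k := by
          refine le_trans (Polynomial.natDegree_sub_le _ _) ?_
          simp only [max_le_iff]
          constructor
          · rw [← h]
          · exact le_trans (Polynomial.natDegree_C_mul_le _ _) (le_of_eq (hφdeg k))
        rcases lt_or_eq_of_le hle with h' | h'
        · exact h'
        · exfalso
          apply hq0
          have : q.leadingCoeff = 0 := by rw [Polynomial.leadingCoeff, h', hqk]
          exact Polynomial.leadingCoeff_eq_zero.mp this
      rw [hpq]
      exact Submodule.add_mem _ (ih (le_of_lt hk) q hqdeg) (Submodule.smul_mem _ _ hmem)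

/-- Lemma 2: if `τ` is a zero of `h_n` with `τ ≠ lam` and `T = dist(τ, supp μ)`, then
`|z₀ - τ| ≥ T |h_n(z₀)| / (K_{n-1}(z₀,z₀)^{1/2} ‖h_n‖_{L²(dμ)})`, where
`h_n(z) = (1 - conj(lam) z) K_{n-1}(z, lam)`. -/
theorem zero_distance_lower_bound
    (μ : Measure ℂ) [IsProbabilityMeasure μ]
    (hcirc : ∀ᵐ z ∂μ, ‖z‖ = 1)
    (hinf : (msupport μ).Infinite)
    (φ : ℕ → Polynomial ℂ)
    (hφdeg : ∀ j, (φ j).natDegree = j)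
    (hφon : ∀ i j, ∫ z, (φ i).eval z * (starRingEnd ℂ) ((φ j).eval z) ∂μ
      = if i = j then 1 else 0)
    (lam : ℂ) (hlam : ‖lam‖ = 1)
    (n : ℕ) (hn : 1 ≤ n)
    (τ : ℂ) (hτlam : τ ≠ lam)
    (hτ : (1 - (starRingEnd ℂ) lam * τ)
        * ∑ j ∈ Finset.range n, (φ j).eval τ * (starRingEnd ℂ) ((φ j).eval lam) = 0)
    (z₀ : ℂ) :
    Metric.infDist τ (msupport μ)
        * ‖(1 - (starRingEnd ℂ) lam * z₀)
            * ∑ j ∈ Finset.range n, (φ j).eval z₀ * (starRingEnd ℂ) ((φ j).eval lam)‖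
        / (Real.sqrt (∑ j ∈ Finset.range n, ‖(φ j).eval z₀‖ ^ 2)
            * Real.sqrt (∫ z, ‖(1 - (starRingEnd ℂ) lam * z)
                * ∑ j ∈ Finset.range n, (φ j).eval z * (starRingEnd ℂ) ((φ j).eval lam)‖ ^ 2 ∂μ))
      ≤ ‖z₀ - τ‖ := by
  classical
  set T : ℝ := Metric.infDist τ (msupport μ) with hT
  have hT0 : 0 ≤ T := Metric.infDist_nonneg
  have hφ0 : ∀ j, φ j ≠ 0 := by
    intro j hj
    have := hφon j j
    simp [hj] at this
  -- the polynomial h_n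
  set P : Polynomial ℂ := (1 - Polynomial.C ((starRingEnd ℂ) lam) * Polynomial.X)
      * ∑ j ∈ Finset.range n, φ j * Polynomial.C ((starRingEnd ℂ) ((φ j).eval lam)) with hP
  have heval : ∀ z : ℂ, P.eval z = (1 - (starRingEnd ℂ) lam * z)
      * ∑ j ∈ Finset.range n, (φ j).eval z * (starRingEnd ℂ) ((φ j).eval lam) := by
    intro z
    simp [hP, Polynomial.eval_finset_sum]
  have hroot : P.IsRoot τ := by rw [Polynomial.IsRoot, heval τ]; exact hτ
  obtain ⟨g, hg⟩ := Polynomial.dvd_iff_isRoot.mpr hroot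
  have hgeval : ∀ z : ℂ, P.eval z = (z - τ) * g.eval z := by
    intro z; rw [hg]; simp
  -- degree bound on g
  have hPdeg : P.natDegree ≤ n := by
    refine le_trans (Polynomial.natDegree_mul_le) ?_
    have h1 : (1 - Polynomial.C ((starRingEnd ℂ) lam) * Polynomial.X).natDegree ≤ 1 := by
      refine le_trans (Polynomial.natDegree_sub_le _ _) ?_
      simp only [Polynomial.natDegree_one, max_le_iff]
      exact ⟨Nat.zero_le _, le_trans (Polynomial.natDegree_C_mul_le _ _)
        (le_of_eq Polynomial.natDegree_X)⟩
    have h2 : (∑ j ∈ Finset.range n, φ j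
        * Polynomial.C ((starRingEnd ℂ) ((φ j).eval lam))).natDegree ≤ n - 1 := by
      refine Polynomial.natDegree_sum_le_of_forall_le _ _ fun j hj => ?_
      refine le_trans (Polynomial.natDegree_mul_le) ?_
      simp only [Polynomial.natDegree_C, add_zero, hφdeg j]
      exact Nat.le_sub_one_of_lt (Finset.mem_range.mp hj)
    omega
  have hglt : g.natDegree < n := by
    by_cases hg0 : g = 0
    · rw [hg0, Polynomial.natDegree_zero]; omega
    · have := Polynomial.natDegree_mul (Polynomial.X_sub_C_ne_zero τ) hg0
      rw [← hg] at this
      rw [Polynomial.natDegree_X_sub_C] at this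
      omega
  -- expand g in the basis
  obtain ⟨cf, hcf⟩ := (Submodule.mem_span_range_iff_exists_fun ℂ).mp
    (span_poly φ hφ0 hφdeg n n le_rfl g hglt)
  set c : ℕ → ℂ := fun j => if hj : j < n then cf ⟨j, hj⟩ else 0 with hcdef
  have hgsum : g = ∑ j ∈ Finset.range n, Polynomial.C (c j) * φ j := by
    rw [← hcf, Finset.sum_range]
    refine Finset.sum_congr rfl fun i _ => ?_
    rw [Polynomial.smul_eq_C_mul]
    congr 2
    simp [hcdef, i.isLt]
  have hgev : ∀ z : ℂ, g.eval z = ∑ j ∈ Finset.range n, c j * (φ j).eval z := by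
    intro z
    rw [hgsum]
    simp [Polynomial.eval_finset_sum]
  -- Parseval
  have hkey : ∫ z, g.eval z * (starRingEnd ℂ) (g.eval z) ∂μ
      = ∑ j ∈ Finset.range n, c j * (starRingEnd ℂ) (c j) := by
    have hpt : (fun z => g.eval z * (starRingEnd ℂ) (g.eval z))
        = fun z => ∑ i ∈ Finset.range n, ∑ j ∈ Finset.range n,
          (c i * (starRingEnd ℂ) (c j)) * ((φ i).eval z * (starRingEnd ℂ) ((φ j).eval z)) := by
      funext z
      rw [hgev z, map_sum, Finset.sum_mul_sum]
      refine Finset.sum_congr rfl fun i _ => Finset.sum_congr rfl fun j _ => ?_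
      simp only [map_mul]
      ring
    rw [hpt]
    rw [integral_finset_sum _ (fun i _ => integrable_finset_sum _
      (fun j _ => ((integrable_eval_mul μ hcirc (φ i) (φ j))).const_mul _))]
    have : ∀ i ∈ Finset.range n,
        (∫ z, ∑ j ∈ Finset.range n, (c i * (starRingEnd ℂ) (c j))
          * ((φ i).eval z * (starRingEnd ℂ) ((φ j).eval z)) ∂μ)
        = c i * (starRingEnd ℂ) (c i) := by
      intro i hi
      rw [integral_finset_sum _
        (fun j _ => ((integrable_eval_mul μ hcirc (φ i) (φ j))).const_mul _)]
      have : ∀ j ∈ Finset.range n,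
          (∫ z, (c i * (starRingEnd ℂ) (c j))
            * ((φ i).eval z * (starRingEnd ℂ) ((φ j).eval z)) ∂μ)
          = (c i * (starRingEnd ℂ) (c j)) * (if i = j then 1 else 0) := by
        intro j _
        rw [integral_const_mul, hφon i j]
      rw [Finset.sum_congr rfl this]
      simp [Finset.mem_range.mp hi]
    rw [Finset.sum_congr rfl this]
  have hpars : (∫ z, ‖g.eval z‖ ^ 2 ∂μ) = ∑ j ∈ Finset.range n, ‖c j‖ ^ 2 := by
    have h1 : ∀ w : ℂ, w * (starRingEnd ℂ) w = ((‖w‖ ^ 2 : ℝ) : ℂ) := by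
      intro w
      rw [Complex.mul_conj]
      norm_cast
      rw [Complex.normSq_eq_norm_sq]
    have h2 : ∫ z, ((‖g.eval z‖ ^ 2 : ℝ) : ℂ) ∂μ
        = ((∫ z, ‖g.eval z‖ ^ 2 ∂μ : ℝ) : ℂ) := integral_ofReal
    have h3 : ((∫ z, ‖g.eval z‖ ^ 2 ∂μ : ℝ) : ℂ)
        = ((∑ j ∈ Finset.range n, ‖c j‖ ^ 2 : ℝ) : ℂ) := by
      rw [← h2]
      calc (∫ z, ((‖g.eval z‖ ^ 2 : ℝ) : ℂ) ∂μ)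
          = ∫ z, g.eval z * (starRingEnd ℂ) (g.eval z) ∂μ :=
            integral_congr_ae (Filter.Eventually.of_forall fun z => (h1 _).symm)
        _ = ∑ j ∈ Finset.range n, c j * (starRingEnd ℂ) (c j) := hkey
        _ = ((∑ j ∈ Finset.range n, ‖c j‖ ^ 2 : ℝ) : ℂ) := by
            rw [Complex.ofReal_sum]
            exact Finset.sum_congr rfl fun j _ => h1 (c j)
    exact_mod_cast h3
  -- Cauchy-Schwarz at z₀
  set A : ℝ := Real.sqrt (∑ j ∈ Finset.range n, ‖(φ j).eval z₀‖ ^ 2) with hA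
  set Sc : ℝ := Real.sqrt (∑ j ∈ Finset.range n, ‖c j‖ ^ 2) with hSc
  have hCS : ‖g.eval z₀‖ ≤ Sc * A := by
    rw [hgev z₀]
    calc ‖∑ j ∈ Finset.range n, c j * (φ j).eval z₀‖
        ≤ ∑ j ∈ Finset.range n, ‖c j * (φ j).eval z₀‖ := norm_sum_le _ _
      _ = ∑ j ∈ Finset.range n, ‖c j‖ * ‖(φ j).eval z₀‖ := by
          exact Finset.sum_congr rfl fun j _ => norm_mul _ _
      _ ≤ Sc * A := by
          have := sum_mul_le_sqrt_mul_sqrt (Finset.range n)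
            (fun j => ‖c j‖) (fun j => ‖(φ j).eval z₀‖)
          simpa [hSc, hA] using this
  -- L² bound
  set B : ℝ := Real.sqrt (∫ z, ‖P.eval z‖ ^ 2 ∂μ) with hB
  have hTSc : T * Sc ≤ B := by
    have hmono : ∀ᵐ z ∂μ, T ^ 2 * ‖g.eval z‖ ^ 2 ≤ ‖P.eval z‖ ^ 2 := by
      filter_upwards [ae_mem_msupport μ] with z hz
      have h1 : T ≤ ‖z - τ‖ := by
        calc T ≤ dist τ z := Metric.infDist_le_dist_of_mem hz
          _ = ‖z - τ‖ := by rw [dist_eq_norm, norm_sub_rev]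
      have h3 : T * ‖g.eval z‖ ≤ ‖P.eval z‖ := by
        rw [hgeval z, norm_mul]
        exact mul_le_mul_of_nonneg_right h1 (norm_nonneg _)
      calc T ^ 2 * ‖g.eval z‖ ^ 2 = (T * ‖g.eval z‖) ^ 2 := by ring
        _ ≤ ‖P.eval z‖ ^ 2 := pow_le_pow_left₀ (mul_nonneg hT0 (norm_nonneg _)) h3 2
    have hint : T ^ 2 * (∫ z, ‖g.eval z‖ ^ 2 ∂μ) ≤ ∫ z, ‖P.eval z‖ ^ 2 ∂μ := by
      rw [← integral_const_mul]
      exact integral_mono_ae ((integrable_eval_sq μ hcirc g).const_mul _)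
        (integrable_eval_sq μ hcirc P) hmono
    calc T * Sc = Real.sqrt (T ^ 2 * (∫ z, ‖g.eval z‖ ^ 2 ∂μ)) := by
          rw [Real.sqrt_mul (sq_nonneg T), Real.sqrt_sq hT0, hSc, hpars]
      _ ≤ B := Real.sqrt_le_sqrt hint
  -- conclude
  have hmain : T * ‖P.eval z₀‖ ≤ ‖z₀ - τ‖ * (A * B) := by
    rw [hgeval z₀, norm_mul]
    calc T * (‖z₀ - τ‖ * ‖g.eval z₀‖) = ‖z₀ - τ‖ * (T * ‖g.eval z₀‖) := by ring
      _ ≤ ‖z₀ - τ‖ * (A * B) := by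
          refine mul_le_mul_of_nonneg_left ?_ (norm_nonneg _)
          calc T * ‖g.eval z₀‖ ≤ T * (Sc * A) :=
                mul_le_mul_of_nonneg_left hCS hT0
            _ = A * (T * Sc) := by ring
            _ ≤ A * B := mul_le_mul_of_nonneg_left hTSc (Real.sqrt_nonneg _)
  have hgoal : T * ‖P.eval z₀‖ / (A * B) ≤ ‖z₀ - τ‖ := by
    rcases (mul_nonneg (Real.sqrt_nonneg _) (Real.sqrt_nonneg _) :
        (0:ℝ) ≤ A * B).lt_or_eq with hAB | hAB
    · rw [div_le_iff₀ hAB]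
      exact hmain
    · rw [← hAB, div_zero]
      exact norm_nonneg _
  calc T * ‖(1 - (starRingEnd ℂ) lam * z₀)
          * ∑ j ∈ Finset.range n, (φ j).eval z₀ * (starRingEnd ℂ) ((φ j).eval lam)‖
        / (A * Real.sqrt (∫ z, ‖(1 - (starRingEnd ℂ) lam * z)
            * ∑ j ∈ Finset.range n, (φ j).eval z * (starRingEnd ℂ) ((φ j).eval lam)‖ ^ 2 ∂μ))
      = T * ‖P.eval z₀‖ / (A * B) := by
        rw [hB]
        congr 2
        · rw [heval z₀]
        · congr 1
          exact integral_congr_ae (Filter.Eventually.of_forall fun z => by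
            simp only [heval])
    _ ≤ ‖z₀ - τ‖ := hgoal
end

section
/- On the unit circle, define σ_{n+1}(e^{iθ}) = s_{n+1}(e^{iθ})/(conj(λ)e^{iθ})^{(n+1)/2} and η_{n+1}(e^{iθ}) = h_{n+1}(e^{iθ})/(i(conj(λ)e^{iθ})^{(n+1)/2}). Then at every zero ζ = e^{iθ} of η_{n+1}, (d/dθ)η_{n+1}(e^{iθ}) · σ_{n+1}(e^{iθ}) = −2K_n(ζ, ζ)·|φ_n(λ)/φ_n(ζ)|² < 0. -/
open Polynomial ComplexConjugate

lemma reflect_reflect' {R} [Semiring R] (N : ℕ) (f : R[X]) : reflect N (reflect N f) = f := by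
  ext i
  simp [coeff_reflect, revAt_invol]

lemma reflect_X_mul' {R} [Semiring R] (j : ℕ) (p : R[X]) (h : p.natDegree ≤ j) :
    reflect (j + 1) (X * p) = reflect j p := by
  have h1 := reflect_mul (f := X) (g := p) (F := 1) (G := j) natDegree_X_le h
  rw [add_comm] at h1
  simpa using h1

lemma reflect_succ_reflect' {R} [Semiring R] (j : ℕ) (p : R[X]) (h : p.natDegree ≤ j) :
    reflect (j + 1) (reflect j p) = X * p := by
  have h1 : reflect (j + 1) (X * p) = reflect j p := reflect_X_mul' j p h
  calc reflect (j + 1) (reflect j p) = reflect (j + 1) (reflect (j + 1) (X * p)) := by rw [h1]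
  _ = X * p := reflect_reflect' _ _

lemma map_conj_map_conj' (p : Polynomial ℂ) :
    (p.map (starRingEnd ℂ)).map (starRingEnd ℂ) = p := by
  rw [Polynomial.map_map]
  have : (starRingEnd ℂ).comp (starRingEnd ℂ) = RingHom.id ℂ := by
    ext x; simp
  rw [this, Polynomial.map_id]

/-- star/reversed Szegő recurrence. -/
lemma star_rec (p q : Polynomial ℂ) (β : ℂ) (r : ℝ) (j : ℕ) (hdeg : p.natDegree ≤ j)
    (hrec : C (r : ℂ) * q = X * p - C ((starRingEnd ℂ) β) * reflect j (p.map (starRingEnd ℂ))) :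
    C (r : ℂ) * reflect (j + 1) (q.map (starRingEnd ℂ))
      = reflect j (p.map (starRingEnd ℂ)) - C β * (X * p) := by
  have h1 := congrArg (fun f => reflect (j + 1) (f.map (starRingEnd ℂ))) hrec
  simp only [Polynomial.map_mul, Polynomial.map_sub, Polynomial.map_C, map_X,
    Complex.conj_ofReal, Complex.conj_conj, reflect_map, map_conj_map_conj'] at h1
  rw [reflect_C_mul, reflect_sub, reflect_C_mul, reflect_X_mul' j (p.map (starRingEnd ℂ))
    (natDegree_map_le.trans hdeg), reflect_succ_reflect' j p hdeg] at h1
  exact h1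

lemma hasDerivAt_div_of_zero {c d : ℝ → ℂ} {c' d' : ℂ} {x : ℝ}
    (hc : HasDerivAt c c' x) (hd : HasDerivAt d d' x)
    (hd0 : d x ≠ 0) (hc0 : c x = 0) :
    HasDerivAt (fun y => c y / d y) (c' / d x) x := by
  have h : HasDerivAt (fun y => c y / d y) ((c' * d x - c x * d') / d x ^ 2) x :=
    hc.div hd hd0
  convert h using 1
  rw [hc0]
  field_simp
  ring


open MeasureTheory
set_option maxHeartbeats 2000000

/-- At every zero `ζ = lam·e^{iθ₀}` of `η_{n+1}`, one has
`(d/dθ)η_{n+1} · σ_{n+1} = -2 K_n(ζ,ζ) |φ_n(lam)/φ_n(ζ)|² < 0`, where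
`η_{n+1}(θ) = h_{n+1}(lam e^{iθ})/(i e^{iθ(n+1)/2})` and
`σ_{n+1}(θ) = s_{n+1}(lam e^{iθ})/e^{iθ(n+1)/2}` (the branch of `(conj(lam)z)^{1/2}`
with argument in `[0,π)`, realized by `θ ∈ [0, 2π)`). -/
theorem derivative_times_sigma_negative
    (μ ν : Measure ℂ) [IsProbabilityMeasure μ] [IsProbabilityMeasure ν]
    (hμc : ∀ᵐ z ∂μ, ‖z‖ = 1) (hνc : ∀ᵐ z ∂ν, ‖z‖ = 1)
    (hμinf : (msupport μ).Infinite) (hνinf : (msupport ν).Infinite)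
    (φ ψ : ℕ → Polynomial ℂ)
    (hφdeg : ∀ j, (φ j).natDegree = j) (hψdeg : ∀ j, (ψ j).natDegree = j)
    (hφon : ∀ i j, ∫ z, (φ i).eval z * (starRingEnd ℂ) ((φ j).eval z) ∂μ
      = if i = j then 1 else 0)
    (hψon : ∀ i j, ∫ z, (ψ i).eval z * (starRingEnd ℂ) ((ψ j).eval z) ∂ν
      = if i = j then 1 else 0)
    (α : ℕ → ℂ) (hα : ∀ j, ‖(α j)‖ < 1)
    (hφ0 : φ 0 = 1) (hψ0 : ψ 0 = 1)
    (hφrec : ∀ j, C (Real.sqrt (1 - ‖(α j)‖ ^ 2) : ℂ) * φ (j + 1)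
      = X * φ j - C ((starRingEnd ℂ) (α j)) * reflect j ((φ j).map (starRingEnd ℂ)))
    (hψrec : ∀ j, C (Real.sqrt (1 - ‖(α j)‖ ^ 2) : ℂ) * ψ (j + 1)
      = X * ψ j - C ((starRingEnd ℂ) (-α j)) * reflect j ((ψ j).map (starRingEnd ℂ)))
    (lam : ℂ) (hlam : ‖lam‖ = 1)
    (n : ℕ)
    (η σ' : ℝ → ℂ)
    (hη : ∀ θ : ℝ, η θ =
      ((starRingEnd ℂ) (lam ^ (n + 1)) * (lam * Complex.exp (θ * Complex.I)) ^ (n + 1)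
          * (φ (n + 1)).eval lam
          * (starRingEnd ℂ) ((φ (n + 1)).eval (lam * Complex.exp (θ * Complex.I)))
        - (starRingEnd ℂ) ((φ (n + 1)).eval lam)
          * (φ (n + 1)).eval (lam * Complex.exp (θ * Complex.I)))
      / (Complex.I * Complex.exp (θ * Complex.I * (((n : ℝ) + 1) / 2))))
    (hσ : ∀ θ : ℝ, σ' θ =
      ((starRingEnd ℂ) (lam ^ (n + 1)) * (lam * Complex.exp (θ * Complex.I)) ^ (n + 1)
          * (φ (n + 1)).eval lam
          * (starRingEnd ℂ) ((ψ (n + 1)).eval (lam * Complex.exp (θ * Complex.I)))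
        + (starRingEnd ℂ) ((φ (n + 1)).eval lam)
          * (ψ (n + 1)).eval (lam * Complex.exp (θ * Complex.I)))
      / Complex.exp (θ * Complex.I * (((n : ℝ) + 1) / 2)))
    (θ₀ : ℝ) (hθ₀ : θ₀ ∈ Set.Ico 0 (2 * Real.pi))
    (hzero : η θ₀ = 0) :
    deriv η θ₀ * σ' θ₀
      = ((-2 * (∑ j ∈ Finset.range (n + 1),
              ‖((φ j).eval (lam * Complex.exp (θ₀ * Complex.I)))‖ ^ 2)
            * ‖((φ n).eval lam
                / (φ n).eval (lam * Complex.exp (θ₀ * Complex.I)))‖ ^ 2 : ℝ) : ℂ) ∧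
    (-2 * (∑ j ∈ Finset.range (n + 1),
        ‖((φ j).eval (lam * Complex.exp (θ₀ * Complex.I)))‖ ^ 2)
      * ‖((φ n).eval lam
          / (φ n).eval (lam * Complex.exp (θ₀ * Complex.I)))‖ ^ 2 : ℝ) < 0 := by
  classical
  set w : ℂ := Complex.exp ((θ₀ : ℂ) * Complex.I) with hw
  set z : ℂ := lam * w with hzdef
  have hlc : lam * conj lam = 1 := by
    rw [Complex.mul_conj, Complex.normSq_eq_norm_sq, hlam]; norm_num
  have habsw : ‖w‖ = 1 := Complex.norm_exp_ofReal_mul_I θ₀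
  have habsz : ‖z‖ = 1 := by rw [hzdef, norm_mul, hlam, habsw, one_mul]
  have hzz : z * conj z = 1 := by
    rw [Complex.mul_conj, Complex.normSq_eq_norm_sq, habsz]; norm_num
  have hlpow : ∀ k : ℕ, lam ^ k * conj lam ^ k = 1 := fun k => by
    rw [← mul_pow, hlc, one_pow]
  have hzpow : ∀ k : ℕ, z ^ k * conj z ^ k = 1 := fun k => by
    rw [← mul_pow, hzz, one_pow]
  set ρ : ℕ → ℝ := fun j => Real.sqrt (1 - ‖α j‖ ^ 2) with hρdef
  have hαlt : ∀ j, ‖α j‖ ^ 2 < 1 := fun j => by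
    have h := hα j; have h0 := norm_nonneg (α j); nlinarith
  have hρpos : ∀ j, 0 < ρ j := fun j => Real.sqrt_pos.2 (by linarith [hαlt j])
  have hρne : ∀ j, ((ρ j : ℝ) : ℂ) ≠ 0 := fun j =>
    Complex.ofReal_ne_zero.2 (ne_of_gt (hρpos j))
  have hρ2 : ∀ j, ((ρ j : ℝ) : ℂ) * ((ρ j : ℝ) : ℂ) = 1 - α j * conj (α j) := fun j => by
    have h1 : (ρ j : ℝ) * ρ j = 1 - ‖α j‖ ^ 2 :=
      Real.mul_self_sqrt (by linarith [hαlt j])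
    have h2 : α j * conj (α j) = ((‖α j‖ ^ 2 : ℝ) : ℂ) := by
      rw [Complex.mul_conj, Complex.sq_norm]
    rw [h2, ← Complex.ofReal_mul, h1]; push_cast; ring
  set aa : ℕ → ℂ := fun j => (φ j).eval z with haa
  set ap : ℕ → ℂ := fun j => (Polynomial.derivative (φ j)).eval z with hap
  set FF : ℕ → ℂ := fun j => (reflect j ((φ j).map (starRingEnd ℂ))).eval z with hFF
  set Fp : ℕ → ℂ :=
    fun j => (Polynomial.derivative (reflect j ((φ j).map (starRingEnd ℂ)))).eval z with hFp
  set bb : ℕ → ℂ := fun j => (ψ j).eval z with hbb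
  set EE : ℕ → ℂ := fun j => (reflect j ((ψ j).map (starRingEnd ℂ))).eval z with hEE
  set AA : ℕ → ℂ := fun j => (φ j).eval lam with hAA
  set GG : ℕ → ℂ := fun j => (reflect j ((φ j).map (starRingEnd ℂ))).eval lam with hGG
  -- polynomial star recurrences
  have hΦ : ∀ j, C ((ρ j : ℝ) : ℂ) * reflect (j+1) ((φ (j+1)).map (starRingEnd ℂ))
      = reflect j ((φ j).map (starRingEnd ℂ)) - C (α j) * (X * φ j) :=
    fun j => star_rec (φ j) (φ (j+1)) (α j) (ρ j) j (le_of_eq (hφdeg j)) (hφrec j)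
  have hΨ : ∀ j, C ((ρ j : ℝ) : ℂ) * reflect (j+1) ((ψ (j+1)).map (starRingEnd ℂ))
      = reflect j ((ψ j).map (starRingEnd ℂ)) - C (-α j) * (X * ψ j) :=
    fun j => star_rec (ψ j) (ψ (j+1)) (-α j) (ρ j) j (le_of_eq (hψdeg j)) (hψrec j)
  -- scalar recurrences at z
  have hra : ∀ j, ((ρ j : ℝ) : ℂ) * aa (j+1) = z * aa j - conj (α j) * FF j := by
    intro j
    have h := congrArg (fun q => Polynomial.eval z q) (hφrec j)
    simpa [haa, hFF] using h
  have hrb : ∀ j, ((ρ j : ℝ) : ℂ) * bb (j+1) = z * bb j + conj (α j) * EE j := by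
    intro j
    have h := congrArg (fun q => Polynomial.eval z q) (hψrec j)
    simp only [Polynomial.eval_mul, Polynomial.eval_sub, Polynomial.eval_C, Polynomial.eval_X,
      Polynomial.eval_neg, map_neg] at h
    simp only [hbb, hEE]
    linear_combination h
  have hrA : ∀ j, ((ρ j : ℝ) : ℂ) * AA (j+1) = lam * AA j - conj (α j) * GG j := by
    intro j
    have h := congrArg (fun q => Polynomial.eval lam q) (hφrec j)
    simpa [hAA, hGG] using h
  have hrF : ∀ j, ((ρ j : ℝ) : ℂ) * FF (j+1) = FF j - α j * (z * aa j) := by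
    intro j
    have h := congrArg (fun q => Polynomial.eval z q) (hΦ j)
    simpa [hFF, haa] using h
  have hrE : ∀ j, ((ρ j : ℝ) : ℂ) * EE (j+1) = EE j + α j * (z * bb j) := by
    intro j
    have h := congrArg (fun q => Polynomial.eval z q) (hΨ j)
    simp only [Polynomial.eval_mul, Polynomial.eval_sub, Polynomial.eval_C, Polynomial.eval_X,
      Polynomial.eval_neg, neg_mul] at h
    simp only [hEE, hbb]
    linear_combination h
  have hrG : ∀ j, ((ρ j : ℝ) : ℂ) * GG (j+1) = GG j - α j * (lam * AA j) := by
    intro j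
    have h := congrArg (fun q => Polynomial.eval lam q) (hΦ j)
    simpa [hGG, hAA] using h
  have hrap : ∀ j, ((ρ j : ℝ) : ℂ) * ap (j+1) = aa j + z * ap j - conj (α j) * Fp j := by
    intro j
    have h := congrArg (fun q => (Polynomial.derivative q).eval z) (hφrec j)
    simp only [Polynomial.derivative_mul, Polynomial.derivative_C, Polynomial.derivative_X,
      Polynomial.derivative_sub, zero_mul, one_mul, zero_add, Polynomial.eval_add,
      Polynomial.eval_mul, Polynomial.eval_sub, Polynomial.eval_C, Polynomial.eval_X] at h
    simp only [hap, haa, hFp, hFF]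
    linear_combination h
  have hrFp : ∀ j, ((ρ j : ℝ) : ℂ) * Fp (j+1) = Fp j - α j * (aa j + z * ap j) := by
    intro j
    have h := congrArg (fun q => (Polynomial.derivative q).eval z) (hΦ j)
    simp only [Polynomial.derivative_mul, Polynomial.derivative_C, Polynomial.derivative_X,
      Polynomial.derivative_sub, zero_mul, one_mul, zero_add, Polynomial.eval_add,
      Polynomial.eval_mul, Polynomial.eval_sub, Polynomial.eval_C, Polynomial.eval_X] at h
    simp only [hap, haa, hFp, hFF]
    linear_combination h
  -- base values
  have ha0 : aa 0 = 1 := by simp [haa, hφ0]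
  have hb0 : bb 0 = 1 := by simp [hbb, hψ0]
  have hA0 : AA 0 = 1 := by simp [hAA, hφ0]
  have hap0 : ap 0 = 0 := by simp [hap, hφ0]
  have hF0 : FF 0 = 1 := by simp [hFF, hφ0]
  have hE0 : EE 0 = 1 := by simp [hEE, hψ0]
  have hG0 : GG 0 = 1 := by simp [hGG, hφ0]
  have hFp0 : Fp 0 = 0 := by simp [hFp, hφ0]
  -- value identities by induction
  have hFval : ∀ j, FF j = z ^ j * conj (aa j) := by
    intro j
    induction j with
    | zero => simp [hF0, ha0]
    | succ j ih =>
      have cih : conj (FF j) = conj z ^ j * aa j := by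
        rw [ih]; simp [map_mul, map_pow]
      have ce : ((ρ j : ℝ) : ℂ) * conj (aa (j+1))
          = conj z * conj (aa j) - α j * conj (FF j) := by
        have h := congrArg (starRingEnd ℂ) (hra j)
        simpa [map_mul, map_sub, Complex.conj_ofReal] using h
      have key : ((ρ j : ℝ) : ℂ) * FF (j+1) = ((ρ j : ℝ) : ℂ) * (z ^ (j+1) * conj (aa (j+1))) := by
        linear_combination hrF j - z ^ (j+1) * ce + ih + (α j * z ^ (j+1)) * cih
          - (z ^ j * conj (aa j)) * hzz + (α j * z * aa j) * hzpow j
      exact mul_left_cancel₀ (hρne j) key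
  have hEval : ∀ j, EE j = z ^ j * conj (bb j) := by
    intro j
    induction j with
    | zero => simp [hE0, hb0]
    | succ j ih =>
      have cih : conj (EE j) = conj z ^ j * bb j := by
        rw [ih]; simp [map_mul, map_pow]
      have ce : ((ρ j : ℝ) : ℂ) * conj (bb (j+1))
          = conj z * conj (bb j) + α j * conj (EE j) := by
        have h := congrArg (starRingEnd ℂ) (hrb j)
        simpa [map_mul, map_add, Complex.conj_ofReal] using h
      have key : ((ρ j : ℝ) : ℂ) * EE (j+1) = ((ρ j : ℝ) : ℂ) * (z ^ (j+1) * conj (bb (j+1))) := by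
        linear_combination hrE j - z ^ (j+1) * ce + ih - (α j * z ^ (j+1)) * cih
          - (z ^ j * conj (bb j)) * hzz - (α j * z * bb j) * hzpow j
      exact mul_left_cancel₀ (hρne j) key
  have hGval : ∀ j, GG j = lam ^ j * conj (AA j) := by
    intro j
    induction j with
    | zero => simp [hG0, hA0]
    | succ j ih =>
      have cih : conj (GG j) = conj lam ^ j * AA j := by
        rw [ih]; simp [map_mul, map_pow]
      have ce : ((ρ j : ℝ) : ℂ) * conj (AA (j+1))
          = conj lam * conj (AA j) - α j * conj (GG j) := by
        have h := congrArg (starRingEnd ℂ) (hrA j)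
        simpa [map_mul, map_sub, Complex.conj_ofReal] using h
      have key : ((ρ j : ℝ) : ℂ) * GG (j+1)
          = ((ρ j : ℝ) : ℂ) * (lam ^ (j+1) * conj (AA (j+1))) := by
        linear_combination hrG j - lam ^ (j+1) * ce + ih + (α j * lam ^ (j+1)) * cih
          - (lam ^ j * conj (AA j)) * hlc + (α j * lam * AA j) * hlpow j
      exact mul_left_cancel₀ (hρne j) key
  have hFd : ∀ j, z ^ 2 * Fp j = (j : ℂ) * z ^ (j+1) * conj (aa j) - z ^ j * conj (ap j) := by
    intro j
    induction j with
    | zero => simp [hFp0, hap0]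
    | succ j ih =>
      have cih : conj z ^ 2 * conj (Fp j)
          = (j : ℂ) * conj z ^ (j+1) * aa j - conj z ^ j * ap j := by
        have h := congrArg (starRingEnd ℂ) ih
        simpa [map_mul, map_sub, map_pow] using h
      have hcFp : conj (Fp j)
          = (j : ℂ) * z ^ 2 * conj z ^ (j+1) * aa j - z ^ 2 * conj z ^ j * ap j := by
        linear_combination z ^ 2 * cih - conj (Fp j) * hzpow 2
      have cFval : conj (FF j) = conj z ^ j * aa j := by
        rw [hFval j]; simp [map_mul, map_pow]
      have ce3 : ((ρ j : ℝ) : ℂ) * conj (aa (j+1))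
          = conj z * conj (aa j) - α j * conj (FF j) := by
        have h := congrArg (starRingEnd ℂ) (hra j)
        simpa [map_mul, map_sub, Complex.conj_ofReal] using h
      have ce4 : ((ρ j : ℝ) : ℂ) * conj (ap (j+1))
          = conj (aa j) + conj z * conj (ap j) - α j * conj (Fp j) := by
        have h := congrArg (starRingEnd ℂ) (hrap j)
        simpa [map_mul, map_add, map_sub, Complex.conj_ofReal] using h
      have key : ((ρ j : ℝ) : ℂ) * (z ^ 2 * Fp (j+1))
          = ((ρ j : ℝ) : ℂ) * (((j : ℂ) + 1) * z ^ (j+2) * conj (aa (j+1))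
              - z ^ (j+1) * conj (ap (j+1))) := by
        linear_combination z ^ 2 * hrFp j - (((j : ℂ) + 1) * z ^ (j+2)) * ce3
          + z ^ (j+1) * ce4 + ih - (α j * z ^ (j+1)) * hcFp
          + (α j * ((j : ℂ) + 1) * z ^ (j+2)) * cFval
          + (- (j : ℂ) * α j * (z ^ j * conj z ^ j) * aa j * z ^ 2
              - (j : ℂ) * z ^ (j+1) * conj (aa j) - z ^ (j+1) * conj (aa j)
              + z ^ j * conj (ap j)) * hzz
          + (α j * z ^ 2 * aa j + α j * z ^ 3 * ap j) * hzpow j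
      have key2 := mul_left_cancel₀ (hρne j) key
      push_cast
      linear_combination key2
  have hI2 : ∀ j, FF j * conj (EE j) + aa j * conj (bb j) = 2 := by
    intro j
    induction j with
    | zero => simp [hF0, hE0, ha0, hb0]; norm_num
    | succ j ih =>
      have ce2 : ((ρ j : ℝ) : ℂ) * conj (EE (j+1))
          = conj (EE j) + conj (α j) * (conj z * conj (bb j)) := by
        have h := congrArg (starRingEnd ℂ) (hrE j)
        simpa [map_mul, map_add, Complex.conj_ofReal] using h
      have ce4 : ((ρ j : ℝ) : ℂ) * conj (bb (j+1))
          = conj z * conj (bb j) + α j * conj (EE j) := by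
        have h := congrArg (starRingEnd ℂ) (hrb j)
        simpa [map_mul, map_add, Complex.conj_ofReal] using h
      have key : ((ρ j : ℝ) : ℂ) * ((ρ j : ℝ) : ℂ)
            * (FF (j+1) * conj (EE (j+1)) + aa (j+1) * conj (bb (j+1)))
          = ((ρ j : ℝ) : ℂ) * ((ρ j : ℝ) : ℂ) * 2 := by
        linear_combination (((ρ j : ℝ) : ℂ) * conj (EE (j+1))) * hrF j
          + (FF j - α j * (z * aa j)) * ce2
          + (((ρ j : ℝ) : ℂ) * conj (bb (j+1))) * hra j
          + (z * aa j - conj (α j) * FF j) * ce4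
          + (1 - α j * conj (α j)) * ih
          + (aa j * conj (bb j) - α j * conj (α j) * aa j * conj (bb j)) * hzz
          + (-2 : ℂ) * hρ2 j
      exact mul_left_cancel₀ (mul_ne_zero (hρne j) (hρne j)) (by linear_combination key)
  have hI1 : ∀ j, FF j * conj (Fp j) - aa j * conj (ap j)
      = -z * ∑ i ∈ Finset.range j, aa i * conj (aa i) := by
    intro j
    induction j with
    | zero => simp [hFp0, hap0]
    | succ j ih =>
      rw [Finset.sum_range_succ]
      have ce2 : ((ρ j : ℝ) : ℂ) * conj (Fp (j+1))
          = conj (Fp j) - conj (α j) * (conj (aa j) + conj z * conj (ap j)) := by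
        have h := congrArg (starRingEnd ℂ) (hrFp j)
        simpa [map_mul, map_add, map_sub, Complex.conj_ofReal] using h
      have ce4 : ((ρ j : ℝ) : ℂ) * conj (ap (j+1))
          = conj (aa j) + conj z * conj (ap j) - α j * conj (Fp j) := by
        have h := congrArg (starRingEnd ℂ) (hrap j)
        simpa [map_mul, map_add, map_sub, Complex.conj_ofReal] using h
      have key : ((ρ j : ℝ) : ℂ) * ((ρ j : ℝ) : ℂ)
            * (FF (j+1) * conj (Fp (j+1)) - aa (j+1) * conj (ap (j+1)))
          = ((ρ j : ℝ) : ℂ) * ((ρ j : ℝ) : ℂ)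
            * (-z * ((∑ i ∈ Finset.range j, aa i * conj (aa i)) + aa j * conj (aa j))) := by
        linear_combination (((ρ j : ℝ) : ℂ) * conj (Fp (j+1))) * hrF j
          + (FF j - α j * (z * aa j)) * ce2
          - (((ρ j : ℝ) : ℂ) * conj (ap (j+1))) * hra j
          + (conj (α j) * FF j - z * aa j) * ce4
          + (1 - α j * conj (α j)) * ih
          + (α j * conj (α j) * aa j * conj (ap j) - aa j * conj (ap j)) * hzz
          + ((∑ i ∈ Finset.range j, aa i * conj (aa i)) * z + aa j * conj (aa j) * z) * hρ2 j
      exact mul_left_cancel₀ (mul_ne_zero (hρne j) (hρne j)) (by linear_combination key)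
  -- nonvanishing on the circle
  have hane : ∀ j, aa j ≠ 0 := by
    intro j
    induction j with
    | zero => rw [ha0]; exact one_ne_zero
    | succ j ih =>
      intro h0
      have h := hra j
      rw [h0, mul_zero, hFval j] at h
      have h2 : z * aa j = conj (α j) * (z ^ j * conj (aa j)) := by linear_combination -h
      have habs : ‖aa j‖ = ‖α j‖ * ‖aa j‖ := by
        have h3 := congrArg norm h2
        simpa [norm_mul, norm_pow, habsz, Complex.norm_conj] using h3
      have hpos : 0 < ‖aa j‖ := norm_pos_iff.2 ih
      nlinarith [hα j]
  have hAne : ∀ j, AA j ≠ 0 := by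
    intro j
    induction j with
    | zero => rw [hA0]; exact one_ne_zero
    | succ j ih =>
      intro h0
      have h := hrA j
      rw [h0, mul_zero, hGval j] at h
      have h2 : lam * AA j = conj (α j) * (lam ^ j * conj (AA j)) := by linear_combination -h
      have habs : ‖AA j‖ = ‖α j‖ * ‖AA j‖ := by
        have h3 := congrArg norm h2
        simpa [norm_mul, norm_pow, hlam, Complex.norm_conj] using h3
      have hpos : 0 < ‖AA j‖ := norm_pos_iff.2 ih
      nlinarith [hα j]
  have hcne : ∀ x : ℂ, x ≠ 0 → conj x ≠ 0 := fun x hx h =>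
    hx (by simpa using congrArg (starRingEnd ℂ) h)
  -- the zero condition
  have hDne : Complex.I * Complex.exp ((θ₀ : ℂ) * Complex.I * ((((n : ℕ) : ℝ) : ℂ) + 1) / 2) ≠ 0 :=
    mul_ne_zero Complex.I_ne_zero (Complex.exp_ne_zero _)
  have hZ : conj lam ^ (n+1) * z ^ (n+1) * AA (n+1) * conj (aa (n+1))
      = conj (AA (n+1)) * aa (n+1) := by
    have hz0 := hzero
    rw [hη θ₀] at hz0
    rw [← hw, ← hzdef] at hz0
    rw [_root_.div_eq_zero_iff] at hz0
    rcases hz0 with h | h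
    · simp only [map_pow] at h
      simp only [haa, hAA, map_pow]
      linear_combination h
    · exact absurd h (mul_ne_zero Complex.I_ne_zero (Complex.exp_ne_zero _))
  -- level-switch identities
  have eA1 : ((ρ n : ℝ) : ℂ) * AA (n+1) = lam * AA n - conj (α n) * (lam ^ n * conj (AA n)) := by
    rw [hrA n, hGval n]
  have ea1 : ((ρ n : ℝ) : ℂ) * aa (n+1) = z * aa n - conj (α n) * (z ^ n * conj (aa n)) := by
    rw [hra n, hFval n]
  have ecA1 : ((ρ n : ℝ) : ℂ) * conj (AA (n+1))
      = conj lam * conj (AA n) - α n * (conj lam ^ n * AA n) := by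
    have h := congrArg (starRingEnd ℂ) eA1
    simpa [map_mul, map_sub, map_pow, Complex.conj_ofReal] using h
  have eca1 : ((ρ n : ℝ) : ℂ) * conj (aa (n+1))
      = conj z * conj (aa n) - α n * (conj z ^ n * aa n) := by
    have h := congrArg (starRingEnd ℂ) ea1
    simpa [map_mul, map_sub, map_pow, Complex.conj_ofReal] using h
  have hcond : conj lam ^ n * z ^ n * AA n * conj (aa n)
      = conj lam * z * conj (AA n) * aa n := by
    have key : (1 - α n * conj (α n)) * (conj lam ^ n * z ^ n * AA n * conj (aa n)
        - conj lam * z * conj (AA n) * aa n) = 0 := by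
      linear_combination (((ρ n : ℝ) : ℂ) * ((ρ n : ℝ) : ℂ)) * hZ
        - (conj lam ^ n * z ^ n * conj (aa (n+1)) * conj lam * ((ρ n : ℝ) : ℂ) * z) * eA1
        - (-(conj (AA (n+1)) * ((ρ n : ℝ) : ℂ))) * ea1
        - (z ^ n * conj (aa n) * conj (α n) - aa n * z) * ecA1
        - (AA n * conj lam ^ n * z ^ n * conj lam * lam * z
            - conj lam ^ n * lam ^ n * z ^ n * conj (AA n) * conj (α n) * conj lam * z) * eca1
        - (-(AA n * conj lam ^ n * conj z ^ n * z ^ n * aa n * α n * z)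
            + AA n * conj lam ^ n * z ^ n * conj (aa n) * conj z * z) * hlc
        - (AA n * conj lam ^ n * z ^ n * conj (aa n)
            - conj lam ^ n * lam ^ n * z ^ n * conj (AA n) * conj (aa n) * conj (α n) * conj lam) * hzz
        - (conj z ^ n * z ^ n * aa n * α n * conj (AA n) * conj (α n) * conj lam * z
            - z ^ n * conj (AA n) * conj (aa n) * conj (α n) * conj lam) * hlpow n
        - (-(AA n * conj lam ^ n * aa n * α n * z)
            + aa n * α n * conj (AA n) * conj (α n) * conj lam * z) * hzpow n
    have hne : (1 - α n * conj (α n)) ≠ 0 := by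
      rw [← hρ2 n]; exact mul_ne_zero (hρne n) (hρne n)
    have h2 := (mul_eq_zero.mp key).resolve_left hne
    exact sub_eq_zero.mp h2
  have hcondLn : z ^ n * AA n * conj (aa n) = lam ^ n * (conj lam * z * conj (AA n) * aa n) := by
    linear_combination lam ^ n * hcond - z ^ n * AA n * conj (aa n) * hlpow n
  have hcond2 : conj (α n) * (z ^ n * conj z * AA n * conj (AA n) * conj (aa n) ^ 2)
      = conj (α n) * (lam ^ n * conj lam * conj (AA n) ^ 2 * (aa n * conj (aa n))) := by
    linear_combination (conj (α n) * conj z * conj (AA n) * conj (aa n)) * hcondLn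
      + (conj (α n) * lam ^ n * conj lam * conj (AA n) ^ 2 * aa n * conj (aa n)) * hzz
  have hcond2c : α n * (conj z ^ n * z * conj (AA n) * AA n * aa n ^ 2)
      = α n * (conj lam ^ n * lam * AA n ^ 2 * (conj (aa n) * aa n)) := by
    have h := congrArg (starRingEnd ℂ) hcond2
    simpa [map_mul, map_pow, Complex.conj_conj] using h
  have hratio : AA (n+1) * conj (AA (n+1)) * (aa n * conj (aa n))
      = AA n * conj (AA n) * (aa (n+1) * conj (aa (n+1))) := by
    have key : ((ρ n : ℝ) : ℂ) * ((ρ n : ℝ) : ℂ)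
          * (AA (n+1) * conj (AA (n+1)) * (aa n * conj (aa n)))
        = ((ρ n : ℝ) : ℂ) * ((ρ n : ℝ) : ℂ)
          * (AA n * conj (AA n) * (aa (n+1) * conj (aa (n+1)))) := by
      linear_combination (aa n * conj (AA (n+1)) * conj (aa n) * ((ρ n : ℝ) : ℂ)) * eA1
        - (AA n * conj (AA n) * conj (aa (n+1)) * ((ρ n : ℝ) : ℂ)) * ea1
        + (AA n * aa n * conj (aa n) * lam
            - lam ^ n * aa n * conj (AA n) * conj (aa n) * conj (α n)) * ecA1
        + (AA n * z ^ n * conj (AA n) * conj (aa n) * conj (α n)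
            - AA n * aa n * conj (AA n) * z) * eca1
        + (AA n * aa n * conj (AA n) * conj (aa n)) * hlc
        - (AA n * aa n * conj (AA n) * conj (aa n)) * hzz
        + (AA n * aa n * α n * conj (AA n) * conj (aa n) * conj (α n)) * hlpow n
        - (AA n * aa n * α n * conj (AA n) * conj (aa n) * conj (α n)) * hzpow n
        + hcond2 + hcond2c
    exact mul_left_cancel₀ (mul_ne_zero (hρne n) (hρne n)) key
  -- diagonal identities at level n+1
  have hconjE : conj (EE (n+1)) = conj z ^ (n+1) * bb (n+1) := by
    rw [hEval (n+1)]; simp [map_mul, map_pow]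
  have h2m : aa (n+1) * conj (bb (n+1)) + conj (aa (n+1)) * bb (n+1) = 2 := by
    linear_combination hI2 (n+1) - conj (EE (n+1)) * hFval (n+1)
      - (z ^ (n+1) * conj (aa (n+1))) * hconjE - (conj (aa (n+1)) * bb (n+1)) * hzpow (n+1)
  have cihm : conj z ^ 2 * conj (Fp (n+1))
      = ((n : ℂ) + 1) * conj z ^ (n+2) * aa (n+1) - conj z ^ (n+1) * ap (n+1) := by
    have h := congrArg (starRingEnd ℂ) (hFd (n+1))
    simp only [map_mul, map_sub, map_pow, map_natCast, Complex.conj_conj] at h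
    push_cast at h
    linear_combination h
  have hcFpm : conj (Fp (n+1))
      = ((n : ℂ) + 1) * z ^ 2 * conj z ^ (n+2) * aa (n+1)
        - z ^ 2 * conj z ^ (n+1) * ap (n+1) := by
    linear_combination z ^ 2 * cihm - conj (Fp (n+1)) * hzpow 2
  have hstar : ((n : ℂ) + 1) * aa (n+1) * conj (aa (n+1)) - z * conj (aa (n+1)) * ap (n+1)
      - conj z * aa (n+1) * conj (ap (n+1))
      = -(∑ i ∈ Finset.range (n+1), aa i * conj (aa i)) := by
    linear_combination conj z * hI1 (n+1) - (conj (Fp (n+1)) * conj z) * hFval (n+1)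
      - (z ^ (n+1) * conj (aa (n+1)) * conj z) * hcFpm
      - (((n : ℂ) + 1) * z ^ (n+1) * conj z ^ (n+1) * aa (n+1) * conj (aa (n+1)) * conj z * z
          + ((n : ℂ) + 1) * z ^ (n+1) * conj z ^ (n+1) * aa (n+1) * conj (aa (n+1))
          - z ^ (n+1) * conj z ^ (n+1) * ap (n+1) * conj (aa (n+1)) * z
          + (∑ i ∈ Finset.range (n+1), aa i * conj (aa i))) * hzz
      - (((n : ℂ) + 1) * aa (n+1) * conj (aa (n+1)) - z * ap (n+1) * conj (aa (n+1))) * hzpow (n+1)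
  have hZc : (lam ^ (n+1) * conj z ^ (n+1)) * conj (AA (n+1)) * aa (n+1)
      = AA (n+1) * conj (aa (n+1)) := by
    have h := congrArg (starRingEnd ℂ) hZ
    simpa [map_mul, map_pow, Complex.conj_conj] using h
  have hEmain : (((n : ℂ) + 1) * (conj lam ^ (n+1) * z ^ (n+1)) * AA (n+1) * conj (aa (n+1))
        - (conj lam ^ (n+1) * z ^ (n+1)) * AA (n+1) * conj z * conj (ap (n+1))
        - conj (AA (n+1)) * z * ap (n+1))
      * ((conj lam ^ (n+1) * z ^ (n+1)) * AA (n+1) * conj (bb (n+1))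
        + conj (AA (n+1)) * bb (n+1))
      * (lam ^ (n+1) * conj z ^ (n+1)) * (aa (n+1) * conj (aa (n+1)))
      = -2 * (∑ i ∈ Finset.range (n+1), aa i * conj (aa i))
        * (AA (n+1) * conj (AA (n+1))) := by
    have hZ' : (conj lam ^ (n+1) * z ^ (n+1)) * AA (n+1) * conj (aa (n+1))
        = conj (AA (n+1)) * aa (n+1) := by linear_combination hZ
    linear_combination
      (AA (n+1) * aa (n+1) * conj (aa (n+1)) * conj (bb (n+1)) * (lam ^ (n+1) * conj z ^ (n+1))
          * ((n : ℂ) + 1) * (conj lam ^ (n+1) * z ^ (n+1))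
        - AA (n+1) * aa (n+1) * conj (ap (n+1)) * conj (bb (n+1))
          * (lam ^ (n+1) * conj z ^ (n+1)) * conj z * (conj lam ^ (n+1) * z ^ (n+1))
        - AA (n+1) * aa (n+1) * conj (ap (n+1)) * conj (bb (n+1)) * conj z
        + aa (n+1) ^ 2 * conj (AA (n+1)) * conj (bb (n+1)) * (lam ^ (n+1) * conj z ^ (n+1))
          * ((n : ℂ) + 1)
        - aa (n+1) * ap (n+1) * conj (AA (n+1)) * conj (bb (n+1))
          * (lam ^ (n+1) * conj z ^ (n+1)) * z
        + aa (n+1) * bb (n+1) * conj (AA (n+1)) * conj (aa (n+1))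
          * (lam ^ (n+1) * conj z ^ (n+1)) * ((n : ℂ) + 1)
        - aa (n+1) * bb (n+1) * conj (AA (n+1)) * conj (ap (n+1))
          * (lam ^ (n+1) * conj z ^ (n+1)) * conj z) * hZ'
      + (-(AA (n+1) * aa (n+1) * conj (ap (n+1)) * conj (bb (n+1)) * conj z
            * (conj lam ^ (n+1) * z ^ (n+1)))
        + aa (n+1) ^ 2 * conj (AA (n+1)) * conj (bb (n+1)) * ((n : ℂ) + 1)
        - aa (n+1) * ap (n+1) * conj (AA (n+1)) * conj (bb (n+1)) * z
        + aa (n+1) * bb (n+1) * conj (AA (n+1)) * conj (aa (n+1)) * ((n : ℂ) + 1)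
        - aa (n+1) * bb (n+1) * conj (AA (n+1)) * conj (ap (n+1)) * conj z
        - ap (n+1) * bb (n+1) * conj (AA (n+1)) * conj (aa (n+1)) * z) * hZc
      + (AA (n+1) * aa (n+1) * conj (AA (n+1)) * conj (aa (n+1)) * ((n : ℂ) + 1)
        - AA (n+1) * aa (n+1) * conj (AA (n+1)) * conj (ap (n+1)) * conj z
        - AA (n+1) * ap (n+1) * conj (AA (n+1)) * conj (aa (n+1)) * z) * h2m
      + (2 * AA (n+1) * conj (AA (n+1))) * hstar
  -- derivative machinery
  have hbase : HasDerivAt (fun θ : ℝ => (θ : ℂ)) 1 θ₀ := by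
    simpa using (hasDerivAt_id θ₀).ofReal_comp
  have hmulI : HasDerivAt (fun θ : ℝ => (θ : ℂ) * Complex.I) Complex.I θ₀ := by
    simpa using hbase.mul_const Complex.I
  have hexpI : HasDerivAt (fun θ : ℝ => Complex.exp ((θ : ℂ) * Complex.I))
      (w * Complex.I) θ₀ := hmulI.cexp
  have hg : HasDerivAt (fun θ : ℝ => lam * Complex.exp ((θ : ℂ) * Complex.I))
      (lam * (w * Complex.I)) θ₀ := hexpI.const_mul lam
  have hpow0 : HasDerivAt (fun θ : ℝ => (lam * Complex.exp ((θ : ℂ) * Complex.I)) ^ (n+1))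
      (((n+1 : ℕ) : ℂ) * z ^ n * (lam * (w * Complex.I))) θ₀ := by
    have h := HasDerivAt.comp (x := θ₀) (h₂ := fun y : ℂ => y ^ (n+1))
      (h := fun θ : ℝ => lam * Complex.exp ((θ : ℂ) * Complex.I))
      (hasDerivAt_pow (n+1) (lam * Complex.exp ((θ₀ : ℂ) * Complex.I))) hg
    simp only [Function.comp_def] at h
    rw [Nat.add_sub_cancel] at h
    exact h
  have hP : HasDerivAt
      (fun θ : ℝ => eval (lam * Complex.exp ((θ : ℂ) * Complex.I)) (φ (n+1)))
      (ap (n+1) * (lam * (w * Complex.I))) θ₀ := by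
    have h := HasDerivAt.comp (x := θ₀) (h₂ := fun y => eval y (φ (n+1)))
      (h := fun θ : ℝ => lam * Complex.exp ((θ : ℂ) * Complex.I))
      (Polynomial.hasDerivAt (φ (n+1)) (lam * Complex.exp ((θ₀ : ℂ) * Complex.I))) hg
    simpa [Function.comp_def] using h
  have hPc : HasDerivAt
      (fun θ : ℝ => (starRingEnd ℂ)
        (eval (lam * Complex.exp ((θ : ℂ) * Complex.I)) (φ (n+1))))
      ((starRingEnd ℂ) (ap (n+1) * (lam * (w * Complex.I)))) θ₀ := by
    exact hP.star
  have hT1 : HasDerivAt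
      (fun θ : ℝ => (starRingEnd ℂ) (lam ^ (n+1))
        * (lam * Complex.exp ((θ : ℂ) * Complex.I)) ^ (n+1) * eval lam (φ (n+1)))
      ((starRingEnd ℂ) (lam ^ (n+1)) * (((n+1 : ℕ) : ℂ) * z ^ n * (lam * (w * Complex.I)))
        * eval lam (φ (n+1))) θ₀ :=
    (hpow0.const_mul _).mul_const _
  have hN := (hT1.mul hPc).sub (hP.const_mul ((starRingEnd ℂ) (eval lam (φ (n+1)))))
  have hDin : HasDerivAt (fun θ : ℝ => (θ : ℂ) * Complex.I * (((n : ℝ) + 1) / 2))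
      (Complex.I * (((n : ℝ) + 1) / 2)) θ₀ := hmulI.mul_const _
  have hD := (hDin.cexp).const_mul Complex.I
  have hD0 : Complex.I * Complex.exp ((θ₀ : ℂ) * Complex.I * (((n : ℝ) + 1) / 2)) ≠ 0 :=
    mul_ne_zero Complex.I_ne_zero (Complex.exp_ne_zero _)
  have hN0 : (starRingEnd ℂ) (lam ^ (n+1)) * z ^ (n+1) * eval lam (φ (n+1))
      * (starRingEnd ℂ) (eval z (φ (n+1)))
      - (starRingEnd ℂ) (eval lam (φ (n+1))) * eval z (φ (n+1)) = 0 := by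
    simp only [map_pow]
    linear_combination hZ
  have hQ := hasDerivAt_div_of_zero hN hD hD0 hN0
  have hηf : η = fun θ : ℝ =>
      ((starRingEnd ℂ) (lam ^ (n + 1)) * (lam * Complex.exp ((θ : ℂ) * Complex.I)) ^ (n + 1)
          * eval lam (φ (n + 1))
          * (starRingEnd ℂ) (eval (lam * Complex.exp ((θ : ℂ) * Complex.I)) (φ (n + 1)))
        - (starRingEnd ℂ) (eval lam (φ (n + 1)))
          * eval (lam * Complex.exp ((θ : ℂ) * Complex.I)) (φ (n + 1)))
      / (Complex.I * Complex.exp ((θ : ℂ) * Complex.I * (((n : ℝ) + 1) / 2))) := funext hη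
  have hder2 : deriv η θ₀ =
      ((starRingEnd ℂ) (lam ^ (n+1)) * (((n+1 : ℕ) : ℂ) * z ^ n * (lam * (w * Complex.I)))
          * AA (n+1) * (starRingEnd ℂ) (aa (n+1))
        + (starRingEnd ℂ) (lam ^ (n+1)) * z ^ (n+1) * AA (n+1)
          * (starRingEnd ℂ) (ap (n+1) * (lam * (w * Complex.I)))
        - (starRingEnd ℂ) (AA (n+1)) * (ap (n+1) * (lam * (w * Complex.I))))
      / (Complex.I * Complex.exp ((θ₀ : ℂ) * Complex.I * (((n : ℝ) + 1) / 2))) := by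
    simp only [hηf]
    exact hQ.deriv
  -- bridging facts
  have hcw : (starRingEnd ℂ) w = lam * conj z := by
    have h := congrArg (starRingEnd ℂ) hzdef
    simp only [map_mul] at h
    linear_combination (-lam) * h - (starRingEnd ℂ) w * hlc
  have hwcu : w ^ (n+1) * (lam ^ (n+1) * conj z ^ (n+1)) = 1 := by
    have h1 : w * (lam * conj z) = 1 := by linear_combination hzz
    have h2 : w ^ (n+1) * (lam ^ (n+1) * conj z ^ (n+1)) = (w * (lam * conj z)) ^ (n+1) := by
      ring
    rw [h2, h1, one_pow]
  have he2 : Complex.exp ((θ₀ : ℂ) * Complex.I * (((n : ℝ) + 1) / 2))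
      * Complex.exp ((θ₀ : ℂ) * Complex.I * (((n : ℝ) + 1) / 2)) = w ^ (n+1) := by
    rw [hw, ← Complex.exp_add, ← Complex.exp_nat_mul]
    congr 1
    push_cast
    ring
  have hfinal2 : (((n : ℂ) + 1) * (conj lam ^ (n+1) * z ^ (n+1)) * AA (n+1) * conj (aa (n+1))
        - (conj lam ^ (n+1) * z ^ (n+1)) * AA (n+1) * conj z * conj (ap (n+1))
        - conj (AA (n+1)) * z * ap (n+1))
      * ((conj lam ^ (n+1) * z ^ (n+1)) * AA (n+1) * conj (bb (n+1))
        + conj (AA (n+1)) * bb (n+1))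
      * (lam ^ (n+1) * conj z ^ (n+1)) * (aa n * conj (aa n))
      = -2 * (∑ i ∈ Finset.range (n+1), aa i * conj (aa i)) * (AA n * conj (AA n)) := by
    refine mul_right_cancel₀ (mul_ne_zero (hane (n+1)) (hcne _ (hane (n+1)))) ?_
    linear_combination (aa n * conj (aa n)) * hEmain
      + (-2 * (∑ i ∈ Finset.range (n+1), aa i * conj (aa i))) * hratio
  have hPne : aa n * conj (aa n) ≠ 0 := mul_ne_zero (hane n) (hcne _ (hane n))
  have hK : ((∑ j ∈ Finset.range (n+1), ‖eval z (φ j)‖ ^ 2 : ℝ) : ℂ)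
      = ∑ i ∈ Finset.range (n+1), aa i * conj (aa i) := by
    push_cast
    refine Finset.sum_congr rfl fun i _ => ?_
    rw [Complex.mul_conj, Complex.normSq_eq_norm_sq]
    norm_cast
  have habsdiv : ((‖eval lam (φ n) / eval z (φ n)‖ ^ 2 : ℝ) : ℂ)
      = (AA n * conj (AA n)) / (aa n * conj (aa n)) := by
    have h1 : ((‖eval lam (φ n) / eval z (φ n)‖ ^ 2 : ℝ) : ℂ)
        = (eval lam (φ n) / eval z (φ n)) * conj (eval lam (φ n) / eval z (φ n)) := by
      rw [Complex.mul_conj, Complex.normSq_eq_norm_sq]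
    rw [h1, map_div₀, div_mul_div_comm]
  have hC' : ((-2 * (∑ j ∈ Finset.range (n + 1), ‖eval z (φ j)‖ ^ 2)
        * ‖eval lam (φ n) / eval z (φ n)‖ ^ 2 : ℝ) : ℂ)
      = (-2 * (∑ i ∈ Finset.range (n+1), aa i * conj (aa i)) * (AA n * conj (AA n)))
        / (aa n * conj (aa n)) := by
    rw [Complex.ofReal_mul, Complex.ofReal_mul, hK, habsdiv]
    push_cast
    ring
  constructor
  · rw [hder2, hσ θ₀, div_mul_div_comm, hC',
      div_eq_div_iff (mul_ne_zero hD0 (Complex.exp_ne_zero _)) hPne]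
    simp only [map_mul, map_pow, Complex.conj_I]
    rw [hcw]
    push_cast
    push_cast at he2
    linear_combination (Complex.I * w ^ (n+1)) * hfinal2
      + (-Complex.I * (((n : ℂ) + 1) * (conj lam ^ (n+1) * z ^ (n+1)) * AA (n+1) * conj (aa (n+1))
          - (conj lam ^ (n+1) * z ^ (n+1)) * AA (n+1) * conj z * conj (ap (n+1))
          - conj (AA (n+1)) * z * ap (n+1))
        * ((conj lam ^ (n+1) * z ^ (n+1)) * AA (n+1) * conj (bb (n+1))
          + conj (AA (n+1)) * bb (n+1))
        * (aa n * conj (aa n))) * hwcu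
      + (2 * (∑ i ∈ Finset.range (n+1), aa i * conj (aa i)) * (AA n * conj (AA n))
          * Complex.I) * he2
      + ((-Complex.I * conj lam ^ (n+1) * z ^ (n+1) * AA (n+1) * conj (ap (n+1)) * conj z)
        * ((conj lam ^ (n+1) * z ^ (n+1)) * AA (n+1) * conj (bb (n+1))
          + conj (AA (n+1)) * bb (n+1))
        * (aa n * conj (aa n))) * hlc
  · have h0 : (0:ℝ) < ∑ j ∈ Finset.range (n+1), ‖eval z (φ j)‖ ^ 2 := by
      have hmem : (0:ℕ) ∈ Finset.range (n+1) := Finset.mem_range.2 (Nat.succ_pos n)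
      have hle := Finset.single_le_sum (f := fun j => ‖eval z (φ j)‖ ^ 2)
        (fun i _ => sq_nonneg _) hmem
      have h1 : ‖eval z (φ 0)‖ = 1 := by rw [hφ0]; simp
      calc (0:ℝ) < 1 := one_pos
      _ ≤ _ := by simpa [h1] using hle
    have h1 : (0:ℝ) < ‖eval lam (φ n) / eval z (φ n)‖ ^ 2 := by
      have hne : eval lam (φ n) / eval z (φ n) ≠ 0 := div_ne_zero (hAne n) (hane n)
      exact pow_pos (norm_pos_iff.2 hne) 2
    nlinarith [mul_pos h0 h1]
end

section
/- For z on the unit circle, conj(ψ_n(z))·φ_n(z) + conj(φ_n(z))·ψ_n(z) = 2, where φ_n and ψ_n are the first and second kind orthonormal polynomials. -/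
open MeasureTheory Polynomial

lemma reflect_eval_circle (p : Polynomial ℂ) (n : ℕ) (hp : p.natDegree ≤ n) (z : ℂ)
    (hz : ‖z‖ = 1) :
    (reflect n (p.map (starRingEnd ℂ))).eval z = z ^ n * (starRingEnd ℂ) (p.eval z) := by
  have hz0 : z ≠ 0 := by
    intro h; rw [h] at hz; simp at hz
  have hconj : (starRingEnd ℂ) z = z⁻¹ := by
    field_simp
    rw [mul_comm, Complex.mul_conj]
    norm_cast
    rw [← Complex.sq_norm, hz]; norm_num
  have hinv : z⁻¹ ≠ 0 := inv_ne_zero hz0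
  letI : Invertible (z⁻¹) := invertibleOfNonzero hinv
  have key := eval₂_reflect_mul_pow (RingHom.id ℂ) (z⁻¹) n (p.map (starRingEnd ℂ))
    (natDegree_map_le.trans hp)
  rw [invOf_eq_inv _, inv_inv] at key
  have h2 : eval z⁻¹ (p.map (starRingEnd ℂ)) = (starRingEnd ℂ) (p.eval z) := by
    have h3 := Polynomial.hom_eval₂ p (RingHom.id ℂ) (starRingEnd ℂ) z
    rw [RingHom.comp_id] at h3
    rw [eval_map, ← hconj, ← h3]
    rfl
  have key' : eval z (reflect n (map (starRingEnd ℂ) p)) * z⁻¹ ^ n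
      = eval z⁻¹ (map (starRingEnd ℂ) p) := key
  rw [h2, inv_pow, ← div_eq_mul_inv, div_eq_iff (pow_ne_zero n hz0)] at key'
  rw [key']; ring

/-- For `z` on the unit circle, `conj(ψ_n(z))φ_n(z) + conj(φ_n(z))ψ_n(z) = 2`, where
`φ_n` and `ψ_n` are the first and second kind orthonormal polynomials (the Verblunsky
coefficients of `ψ` being the negatives of those of `φ`, with `φ_0 = ψ_0 = 1`). -/
theorem mixed_identity_on_circle
    (μ ν : Measure ℂ) [IsProbabilityMeasure μ] [IsProbabilityMeasure ν]
    (hμc : ∀ᵐ z ∂μ, ‖z‖ = 1) (hνc : ∀ᵐ z ∂ν, ‖z‖ = 1)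
    (hμinf : (msupport μ).Infinite) (hνinf : (msupport ν).Infinite)
    (φ ψ : ℕ → Polynomial ℂ)
    (hφdeg : ∀ j, (φ j).natDegree = j) (hψdeg : ∀ j, (ψ j).natDegree = j)
    (hφon : ∀ i j, ∫ z, (φ i).eval z * (starRingEnd ℂ) ((φ j).eval z) ∂μ
      = if i = j then 1 else 0)
    (hψon : ∀ i j, ∫ z, (ψ i).eval z * (starRingEnd ℂ) ((ψ j).eval z) ∂ν
      = if i = j then 1 else 0)
    (α : ℕ → ℂ) (hα : ∀ j, ‖α j‖ < 1)
    (hφ0 : φ 0 = 1) (hψ0 : ψ 0 = 1)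
    (hφrec : ∀ j, C (Real.sqrt (1 - ‖α j‖ ^ 2) : ℂ) * φ (j + 1)
      = X * φ j - C ((starRingEnd ℂ) (α j)) * reflect j ((φ j).map (starRingEnd ℂ)))
    (hψrec : ∀ j, C (Real.sqrt (1 - ‖α j‖ ^ 2) : ℂ) * ψ (j + 1)
      = X * ψ j - C ((starRingEnd ℂ) (-α j)) * reflect j ((ψ j).map (starRingEnd ℂ)))
    (n : ℕ) :
    ∀ z : ℂ, ‖z‖ = 1 →
      (starRingEnd ℂ) ((ψ n).eval z) * (φ n).eval z
        + (starRingEnd ℂ) ((φ n).eval z) * (ψ n).eval z = 2 := by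
  induction n with
  | zero =>
    intro z hz
    simp [hφ0, hψ0]
    norm_num
  | succ n ih =>
    intro z hz
    have habs : ‖α n‖ ^ 2 < 1 := by
      have h0 := norm_nonneg (α n)
      nlinarith [hα n]
    set s : ℝ := Real.sqrt (1 - ‖α n‖ ^ 2) with hs_def
    have hs_sq : s ^ 2 = 1 - ‖α n‖ ^ 2 :=
      Real.sq_sqrt (by linarith)
    have hρ0 : (s : ℂ) ≠ 0 := by
      have : (0:ℝ) < s := Real.sqrt_pos.mpr (by linarith)
      exact_mod_cast ne_of_gt (by exact_mod_cast this)
    have hρ : ((s : ℂ)) ^ 2 = 1 - (starRingEnd ℂ) (α n) * α n := by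
      have h2 : (starRingEnd ℂ) (α n) * α n = ((‖α n‖ ^ 2 : ℝ) : ℂ) := by
        rw [mul_comm, Complex.mul_conj]
        norm_cast
        rw [Complex.sq_norm]
      rw [h2]
      norm_cast
    have hnorm1 : Complex.normSq z = 1 := by
      rw [← Complex.sq_norm, hz]; norm_num
    have hw : z * (starRingEnd ℂ) z = 1 := by
      rw [Complex.mul_conj, hnorm1]; norm_num
    have hwn : (z * (starRingEnd ℂ) z) ^ n = 1 := by rw [hw, one_pow]
    -- evaluate the recursions at z
    have hφe := congrArg (eval z) (hφrec n)
    have hψe := congrArg (eval z) (hψrec n)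
    rw [eval_mul, eval_C, eval_sub, eval_mul, eval_mul, eval_C, eval_X,
      reflect_eval_circle (φ n) n (le_of_eq (hφdeg n)) z hz] at hφe
    rw [eval_mul, eval_C, eval_sub, eval_mul, eval_mul, eval_C, eval_X,
      reflect_eval_circle (ψ n) n (le_of_eq (hψdeg n)) z hz] at hψe
    simp only [map_neg] at hψe
    have hφec := congrArg (starRingEnd ℂ) hφe
    have hψec := congrArg (starRingEnd ℂ) hψe
    simp only [map_mul, map_sub, map_add, map_neg, map_pow, Complex.conj_conj,
      Complex.conj_ofReal] at hφec hψec
    have hih := ih z hz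
    apply mul_left_cancel₀ (pow_ne_zero 2 hρ0)
    set a := eval z (φ n)
    set b := eval z (ψ n)
    set P := eval z (φ (n + 1))
    set Q := eval z (ψ (n + 1))
    set A := α n
    linear_combination
      ((s : ℂ) * (starRingEnd ℂ) Q) * hφe
      + (z * a - (starRingEnd ℂ) A * (z ^ n * (starRingEnd ℂ) a)) * hψec
      + ((s : ℂ) * (starRingEnd ℂ) P) * hψe
      + (z * b + (starRingEnd ℂ) A * (z ^ n * (starRingEnd ℂ) b)) * hφec
      + (z * (starRingEnd ℂ) z - A * (starRingEnd ℂ) A * (z * (starRingEnd ℂ) z) ^ n) * hih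
      + 2 * hw - 2 * (A * (starRingEnd ℂ) A) * hwn - 2 * hρ
end

section
/- Fix λ ∈ ∂𝔻 and define s_n(z) = conj(φ*_{n-1}(λ))ψ*_{n-1}(z) + z conj(λ) conj(φ_{n-1}(λ))ψ_{n-1}(z). Then s_{n+1}(z) − s_n(z) = −(1 − conj(λ)z)·conj(φ_n(λ))·ψ_n(z), and this is nonzero for every z ∈ ∂𝔻 with z ≠ λ. -/
open MeasureTheory Polynomial

section Aux

private lemma aux_eval_reflect (p : Polynomial ℂ) (N : ℕ) (hp : p.natDegree ≤ N) (z : ℂ)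
    (hz : z ≠ 0) : (reflect N p).eval z = z ^ N * p.eval z⁻¹ := by
  letI : Invertible (z⁻¹ : ℂ) := invertibleOfNonzero (inv_ne_zero hz)
  have h := eval₂_reflect_mul_pow (RingHom.id ℂ) z⁻¹ N p hp
  rw [invOf_eq_inv, inv_inv] at h
  have hid : ∀ (q : Polynomial ℂ) (w : ℂ), eval₂ (RingHom.id ℂ) w q = q.eval w := fun q w => rfl
  rw [hid, hid] at h
  rw [← h, inv_pow]
  field_simp

private lemma reflect_one_X : reflect 1 (X : Polynomial ℂ) = 1 := by
  have h := reflect_C_mul_X_pow 1 1 (c := (1 : ℂ))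
  simpa [revAt_le] using h

private lemma reflect_reflect_succ (p : Polynomial ℂ) (m : ℕ) (hp : p.natDegree ≤ m) :
    reflect (m + 1) (reflect m p) = X * p := by
  ext i
  rw [coeff_reflect, coeff_reflect]
  cases i with
  | zero =>
      rw [revAt_le (Nat.zero_le _), Nat.sub_zero, revAt_eq_self_of_lt (Nat.lt_succ_self m)]
      simp [coeff_eq_zero_of_natDegree_lt (lt_of_le_of_lt hp (Nat.lt_succ_self m))]
  | succ k =>
      by_cases hk : k ≤ m
      · rw [revAt_le (Nat.succ_le_succ hk), Nat.succ_sub_succ,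
          revAt_le (Nat.sub_le m k), Nat.sub_sub_self hk, coeff_X_mul]
      · push_neg at hk
        rw [revAt_eq_self_of_lt (Nat.succ_lt_succ hk),
          revAt_eq_self_of_lt (lt_trans hk (Nat.lt_succ_self k)),
          coeff_X_mul, coeff_eq_zero_of_natDegree_lt (lt_of_le_of_lt hp hk),
          coeff_eq_zero_of_natDegree_lt (lt_of_le_of_lt hp (lt_trans hk (Nat.lt_succ_self k)))]

/-- The reversed Szegő recurrence, as a polynomial identity. -/
private lemma reversed_rec (φ : ℕ → Polynomial ℂ) (β : ℕ → ℂ) (r : ℕ → ℝ)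
    (hφdeg : ∀ j, (φ j).natDegree = j)
    (hφrec : ∀ j, C (r j : ℂ) * φ (j + 1)
      = X * φ j - C ((starRingEnd ℂ) (β j)) * reflect j ((φ j).map (starRingEnd ℂ)))
    (j : ℕ) :
    C (r j : ℂ) * reflect (j + 1) ((φ (j + 1)).map (starRingEnd ℂ))
      = reflect j ((φ j).map (starRingEnd ℂ)) - C (β j) * (X * φ j) := by
  have hconjconj : ((starRingEnd ℂ).comp (starRingEnd ℂ)) = RingHom.id ℂ :=
    RingHom.ext fun x => Complex.conj_conj x
  have hdegmap : ((φ j).map (starRingEnd ℂ)).natDegree ≤ j := by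
    rw [natDegree_map]; exact (hφdeg j).le
  have h := congrArg (fun q : Polynomial ℂ => reflect (j + 1) (q.map (starRingEnd ℂ))) (hφrec j)
  simp only [Polynomial.map_mul, Polynomial.map_sub, map_C, Polynomial.map_X,
    Complex.conj_ofReal, Complex.conj_conj, reflect_sub, reflect_C_mul] at h
  rw [show (j + 1) = 1 + j from Nat.add_comm j 1] at h
  rw [reflect_mul X ((φ j).map (starRingEnd ℂ)) natDegree_X_le hdegmap, reflect_one_X,
    one_mul] at h
  rw [show (1 + j) = j + 1 from Nat.add_comm 1 j] at h
  simp only [← reflect_map] at h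
  simp only [Polynomial.map_map, hconjconj, Polynomial.map_id] at h
  rw [reflect_reflect_succ (φ j) j (hφdeg j).le] at h
  exact h

/-- For `|z| = 1`, `|p*(z)| = |p(z)|`. -/
private lemma abs_reflect_circle (p : Polynomial ℂ) (N : ℕ) (hp : p.natDegree ≤ N) (z : ℂ)
    (hz : ‖z‖ = 1) :
    ‖(reflect N ((p.map (starRingEnd ℂ)))).eval z‖ = ‖p.eval z‖ := by
  have hz0 : z ≠ 0 := by
    intro h; rw [h] at hz; simp at hz
  have hdeg : (p.map (starRingEnd ℂ)).natDegree ≤ N := by rw [natDegree_map]; exact hp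
  rw [aux_eval_reflect _ N hdeg z hz0]
  rw [Complex.inv_eq_conj hz]
  rw [eval_map, eval₂_hom]
  rw [norm_mul, norm_pow, Complex.norm_conj, hz]
  simp

private lemma key_ineq (u v a : ℂ) (ha : ‖a‖ ≤ 1) (huv : ‖u‖ ≤ ‖v‖) :
    ‖u - (starRingEnd ℂ) a * v‖ ≤ ‖v - a * u‖ := by
  have hc : ((Complex.normSq (v - a * u) - Complex.normSq (u - (starRingEnd ℂ) a * v) : ℝ) : ℂ)
      = (((1 - Complex.normSq a) * (Complex.normSq v - Complex.normSq u) : ℝ) : ℂ) := by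
    push_cast
    rw [← Complex.mul_conj, ← Complex.mul_conj, ← Complex.mul_conj, ← Complex.mul_conj,
      ← Complex.mul_conj]
    simp only [map_sub, map_mul, Complex.conj_conj]
    ring
  have hr : Complex.normSq (v - a * u) - Complex.normSq (u - (starRingEnd ℂ) a * v)
      = (1 - Complex.normSq a) * (Complex.normSq v - Complex.normSq u) :=
    Complex.ofReal_injective hc
  have h1 : Complex.normSq a ≤ 1 := by
    rw [← Complex.sq_norm]; nlinarith [norm_nonneg a]
  have h2 : Complex.normSq u ≤ Complex.normSq v := by
    rw [← Complex.sq_norm, ← Complex.sq_norm]; nlinarith [norm_nonneg u]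
  rw [Complex.norm_def, Complex.norm_def]
  apply Real.sqrt_le_sqrt
  nlinarith

private lemma opuc_circle (φ : ℕ → Polynomial ℂ) (β : ℕ → ℂ) (r : ℕ → ℝ)
    (hβ : ∀ j, ‖β j‖ < 1) (hr : ∀ j, r j ≠ 0)
    (hφ0 : φ 0 = 1) (hφdeg : ∀ j, (φ j).natDegree = j)
    (hφrec : ∀ j, C (r j : ℂ) * φ (j + 1)
      = X * φ j - C ((starRingEnd ℂ) (β j)) * reflect j ((φ j).map (starRingEnd ℂ))) :
    ∀ n, ∀ z : ℂ, ‖z‖ ≤ 1 →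
      ‖(φ n).eval z‖
          ≤ ‖(reflect n ((φ n).map (starRingEnd ℂ))).eval z‖
        ∧ (reflect n ((φ n).map (starRingEnd ℂ))).eval z ≠ 0 := by
  intro n
  induction n with
  | zero =>
      intro z hz
      simp [hφ0, reflect_C]
  | succ m ih =>
      intro z hz
      obtain ⟨hle, hne⟩ := ih z hz
      have hrev := reversed_rec φ β r hφdeg hφrec m
      set u := z * (φ m).eval z with hu
      set v := (reflect m ((φ m).map (starRingEnd ℂ))).eval z with hv
      have e1 : (r m : ℂ) * (φ (m + 1)).eval z = u - (starRingEnd ℂ) (β m) * v := by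
        have := congrArg (eval z) (hφrec m)
        simpa [hu, hv] using this
      have e2 : (r m : ℂ) * (reflect (m + 1) ((φ (m + 1)).map (starRingEnd ℂ))).eval z
          = v - β m * u := by
        have := congrArg (eval z) hrev
        simpa [hu, hv, mul_assoc] using this
      have hvpos : 0 < ‖v‖ := by
        rwa [norm_pos_iff]
      have huv : ‖u‖ ≤ ‖v‖ := by
        rw [hu, norm_mul]
        calc ‖z‖ * ‖(φ m).eval z‖
            ≤ 1 * ‖v‖ := by
              apply mul_le_mul hz hle (norm_nonneg _) zero_le_one
          _ = ‖v‖ := one_mul _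
      have hpos : 0 < ‖v - β m * u‖ := by
        have h1 : ‖v‖ ≤ ‖v - β m * u‖ + ‖β m * u‖ := by
          calc ‖v‖ = ‖(v - β m * u) + β m * u‖ := by ring_nf
            _ ≤ _ := norm_add_le _ _
        have h2 : ‖β m * u‖ ≤ ‖β m‖ * ‖v‖ := by
          rw [norm_mul]
          exact mul_le_mul_of_nonneg_left huv (norm_nonneg _)
        nlinarith [hβ m]
      have habs := key_ineq u v (β m) (hβ m).le huv
      have hrpos : 0 < ‖(r m : ℂ)‖ := by
        rw [Complex.norm_real, Real.norm_eq_abs]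
        exact abs_pos.mpr (hr m)
      constructor
      · have hh : ‖(r m : ℂ)‖ * ‖(φ (m + 1)).eval z‖
            ≤ ‖(r m : ℂ)‖
              * ‖(reflect (m + 1) ((φ (m + 1)).map (starRingEnd ℂ))).eval z‖ := by
          rw [← norm_mul, ← norm_mul, e1, e2]
          exact habs
        exact le_of_mul_le_mul_left hh hrpos
      · intro h0
        rw [h0, mul_zero] at e2
        rw [← e2] at hpos
        simp at hpos

private lemma opuc_ne_zero (φ : ℕ → Polynomial ℂ) (β : ℕ → ℂ) (r : ℕ → ℝ)
    (hβ : ∀ j, ‖β j‖ < 1) (hr : ∀ j, r j ≠ 0)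
    (hφ0 : φ 0 = 1) (hφdeg : ∀ j, (φ j).natDegree = j)
    (hφrec : ∀ j, C (r j : ℂ) * φ (j + 1)
      = X * φ j - C ((starRingEnd ℂ) (β j)) * reflect j ((φ j).map (starRingEnd ℂ)))
    (n : ℕ) (z : ℂ) (hz : ‖z‖ = 1) : (φ n).eval z ≠ 0 := by
  intro h0
  apply (opuc_circle φ β r hβ hr hφ0 hφdeg hφrec n z hz.le).2
  have habs := abs_reflect_circle (φ n) n (hφdeg n).le z hz
  rw [h0, norm_zero] at habs
  exact norm_eq_zero.mp habs

private theorem sn_difference_nonzero_aux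
    (φ ψ : ℕ → Polynomial ℂ)
    (hφdeg : ∀ j, (φ j).natDegree = j) (hψdeg : ∀ j, (ψ j).natDegree = j)
    (α : ℕ → ℂ) (hα : ∀ j, ‖α j‖ < 1)
    (hφ0 : φ 0 = 1) (hψ0 : ψ 0 = 1)
    (hφrec : ∀ j, C (Real.sqrt (1 - ‖α j‖ ^ 2) : ℂ) * φ (j + 1)
      = X * φ j - C ((starRingEnd ℂ) (α j)) * reflect j ((φ j).map (starRingEnd ℂ)))
    (hψrec : ∀ j, C (Real.sqrt (1 - ‖α j‖ ^ 2) : ℂ) * ψ (j + 1)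
      = X * ψ j - C ((starRingEnd ℂ) (-α j)) * reflect j ((ψ j).map (starRingEnd ℂ)))
    (lam : ℂ) (hlam : ‖lam‖ = 1)
    (n : ℕ) (hn : 1 ≤ n) :
    (∀ z : ℂ,
      ((starRingEnd ℂ) ((reflect n ((φ n).map (starRingEnd ℂ))).eval lam)
          * (reflect n ((ψ n).map (starRingEnd ℂ))).eval z
        + z * (starRingEnd ℂ) lam * (starRingEnd ℂ) ((φ n).eval lam) * (ψ n).eval z)
      - ((starRingEnd ℂ) ((reflect (n - 1) ((φ (n - 1)).map (starRingEnd ℂ))).eval lam)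
          * (reflect (n - 1) ((ψ (n - 1)).map (starRingEnd ℂ))).eval z
        + z * (starRingEnd ℂ) lam * (starRingEnd ℂ) ((φ (n - 1)).eval lam)
          * (ψ (n - 1)).eval z)
      = -(1 - (starRingEnd ℂ) lam * z) * (starRingEnd ℂ) ((φ n).eval lam) * (ψ n).eval z) ∧
    (∀ z : ℂ, ‖z‖ = 1 → z ≠ lam →
      -(1 - (starRingEnd ℂ) lam * z) * (starRingEnd ℂ) ((φ n).eval lam) * (ψ n).eval z
        ≠ 0) := by
  obtain ⟨m, rfl⟩ : ∃ m, n = m + 1 := ⟨n - 1, (Nat.succ_pred_eq_of_pos hn).symm⟩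
  simp only [Nat.add_sub_cancel]
  set r : ℕ → ℝ := fun j => Real.sqrt (1 - ‖α j‖ ^ 2) with hrdef
  have hsqpos : ∀ j, (0 : ℝ) < 1 - ‖α j‖ ^ 2 := by
    intro j; nlinarith [hα j, norm_nonneg (α j)]
  have hrne : ∀ j, r j ≠ 0 := fun j => ne_of_gt (Real.sqrt_pos.mpr (hsqpos j))
  set ρ : ℂ := ((r m : ℝ) : ℂ) with hρdef
  have hρ : ρ ≠ 0 := Complex.ofReal_ne_zero.mpr (hrne m)
  have hρ2 : ρ ^ 2 = 1 - (starRingEnd ℂ) (α m) * α m := by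
    rw [hρdef, ← Complex.ofReal_pow, hrdef]
    simp only
    rw [Real.sq_sqrt (hsqpos m).le, Complex.ofReal_sub, Complex.ofReal_one,
      show ((‖α m‖ ^ 2 : ℝ) : ℂ) = (starRingEnd ℂ) (α m) * α m by
        rw [Complex.sq_norm, mul_comm, Complex.mul_conj]]
  have hrevφ := reversed_rec φ α r hφdeg hφrec
  have hrevψ := reversed_rec ψ (fun j => -α j) r hψdeg hψrec
  constructor
  · intro z
    have h1 : ρ * (starRingEnd ℂ) ((φ (m + 1)).eval lam)
        = (starRingEnd ℂ) lam * (starRingEnd ℂ) ((φ m).eval lam)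
          - α m * (starRingEnd ℂ) ((reflect m ((φ m).map (starRingEnd ℂ))).eval lam) := by
      have e' := congrArg (fun p : Polynomial ℂ => (starRingEnd ℂ) (Polynomial.eval lam p))
        (hφrec m)
      simp only [eval_mul, eval_sub, eval_C, eval_X, map_mul, map_sub, Complex.conj_ofReal,
        Complex.conj_conj] at e'
      linear_combination e'
    have h2 : ρ * (starRingEnd ℂ) ((reflect (m + 1) ((φ (m + 1)).map (starRingEnd ℂ))).eval lam)
        = (starRingEnd ℂ) ((reflect m ((φ m).map (starRingEnd ℂ))).eval lam)
          - (starRingEnd ℂ) (α m)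
            * ((starRingEnd ℂ) lam * (starRingEnd ℂ) ((φ m).eval lam)) := by
      have e' := congrArg (fun p : Polynomial ℂ => (starRingEnd ℂ) (Polynomial.eval lam p))
        (hrevφ m)
      simp only [eval_mul, eval_sub, eval_C, eval_X, map_mul, map_sub, Complex.conj_ofReal,
        Complex.conj_conj] at e'
      linear_combination e'
    have h3 : ρ * (ψ (m + 1)).eval z
        = z * (ψ m).eval z
          + (starRingEnd ℂ) (α m) * (reflect m ((ψ m).map (starRingEnd ℂ))).eval z := by
      have e' := congrArg (Polynomial.eval z) (hψrec m)
      simp only [eval_mul, eval_sub, eval_C, eval_X, eval_neg, map_neg] at e'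
      linear_combination e'
    have h4 : ρ * (reflect (m + 1) ((ψ (m + 1)).map (starRingEnd ℂ))).eval z
        = (reflect m ((ψ m).map (starRingEnd ℂ))).eval z
          + α m * (z * (ψ m).eval z) := by
      have e' := congrArg (Polynomial.eval z) (hrevψ m)
      simp only [eval_mul, eval_sub, eval_C, eval_X, eval_neg, map_neg] at e'
      linear_combination e'
    have hkey : (starRingEnd ℂ) ((reflect (m + 1) ((φ (m + 1)).map (starRingEnd ℂ))).eval lam)
            * (reflect (m + 1) ((ψ (m + 1)).map (starRingEnd ℂ))).eval z
          + (starRingEnd ℂ) ((φ (m + 1)).eval lam) * (ψ (m + 1)).eval z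
        = (starRingEnd ℂ) ((reflect m ((φ m).map (starRingEnd ℂ))).eval lam)
            * (reflect m ((ψ m).map (starRingEnd ℂ))).eval z
          + (starRingEnd ℂ) lam * z
            * ((starRingEnd ℂ) ((φ m).eval lam) * (ψ m).eval z) := by
      apply mul_left_cancel₀ (pow_ne_zero 2 hρ)
      calc ρ ^ 2 * ((starRingEnd ℂ) ((reflect (m + 1) ((φ (m + 1)).map (starRingEnd ℂ))).eval lam)
              * (reflect (m + 1) ((ψ (m + 1)).map (starRingEnd ℂ))).eval z
            + (starRingEnd ℂ) ((φ (m + 1)).eval lam) * (ψ (m + 1)).eval z)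
          = (ρ * (starRingEnd ℂ) ((reflect (m + 1) ((φ (m + 1)).map (starRingEnd ℂ))).eval lam))
              * (ρ * (reflect (m + 1) ((ψ (m + 1)).map (starRingEnd ℂ))).eval z)
            + (ρ * (starRingEnd ℂ) ((φ (m + 1)).eval lam)) * (ρ * (ψ (m + 1)).eval z) := by
            ring
        _ = ((starRingEnd ℂ) ((reflect m ((φ m).map (starRingEnd ℂ))).eval lam)
              - (starRingEnd ℂ) (α m)
                * ((starRingEnd ℂ) lam * (starRingEnd ℂ) ((φ m).eval lam)))
            * ((reflect m ((ψ m).map (starRingEnd ℂ))).eval z + α m * (z * (ψ m).eval z))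
            + ((starRingEnd ℂ) lam * (starRingEnd ℂ) ((φ m).eval lam)
              - α m * (starRingEnd ℂ) ((reflect m ((φ m).map (starRingEnd ℂ))).eval lam))
            * (z * (ψ m).eval z
              + (starRingEnd ℂ) (α m) * (reflect m ((ψ m).map (starRingEnd ℂ))).eval z) := by
            rw [h1, h2, h3, h4]
        _ = (1 - (starRingEnd ℂ) (α m) * α m)
            * ((starRingEnd ℂ) ((reflect m ((φ m).map (starRingEnd ℂ))).eval lam)
                * (reflect m ((ψ m).map (starRingEnd ℂ))).eval z
              + (starRingEnd ℂ) lam * z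
                * ((starRingEnd ℂ) ((φ m).eval lam) * (ψ m).eval z)) := by ring
        _ = ρ ^ 2 * ((starRingEnd ℂ) ((reflect m ((φ m).map (starRingEnd ℂ))).eval lam)
                * (reflect m ((ψ m).map (starRingEnd ℂ))).eval z
              + (starRingEnd ℂ) lam * z
                * ((starRingEnd ℂ) ((φ m).eval lam) * (ψ m).eval z)) := by rw [hρ2]
    linear_combination hkey
  · intro z hz hzlam
    have hφne : (φ (m + 1)).eval lam ≠ 0 :=
      opuc_ne_zero φ α r hα hrne hφ0 hφdeg hφrec (m + 1) lam hlam
    have hψne : (ψ (m + 1)).eval z ≠ 0 :=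
      opuc_ne_zero ψ (fun j => -α j) r
        (fun j => by simpa using hα j) hrne hψ0 hψdeg hψrec (m + 1) z hz
    have hlamne : (starRingEnd ℂ) lam ≠ 0 := by
      simp only [ne_eq, _root_.map_eq_zero]
      intro h; rw [h] at hlam; simp at hlam
    have hfac : (1 : ℂ) - (starRingEnd ℂ) lam * z ≠ 0 := by
      intro h
      apply hzlam
      have h1 : (starRingEnd ℂ) lam * z = 1 := by linear_combination -h
      have h2 : (starRingEnd ℂ) lam * lam = 1 := by
        rw [mul_comm, Complex.mul_conj]
        rw [show Complex.normSq lam = 1 by rw [← Complex.sq_norm, hlam]; norm_num]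
        norm_num
      exact mul_left_cancel₀ hlamne (h1.trans h2.symm)
    exact mul_ne_zero (mul_ne_zero (neg_ne_zero.mpr hfac)
      (by simpa only [ne_eq, _root_.map_eq_zero] using hφne)) hψne

end Aux

/-- With `s_m(z) = conj(φ*_{m-1}(lam))ψ*_{m-1}(z) + z conj(lam) conj(φ_{m-1}(lam))ψ_{m-1}(z)`
(for `m ≥ 1`), one has `s_{n+1}(z) - s_n(z) = -(1 - conj(lam)z) conj(φ_n(lam)) ψ_n(z)`,
which is nonzero for every `z ∈ ∂𝔻` with `z ≠ lam`. -/
theorem sn_difference_nonzero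
    (μ ν : Measure ℂ) [IsProbabilityMeasure μ] [IsProbabilityMeasure ν]
    (hμc : ∀ᵐ z ∂μ, ‖z‖ = 1) (hνc : ∀ᵐ z ∂ν, ‖z‖ = 1)
    (hμinf : (msupport μ).Infinite) (hνinf : (msupport ν).Infinite)
    (φ ψ : ℕ → Polynomial ℂ)
    (hφdeg : ∀ j, (φ j).natDegree = j) (hψdeg : ∀ j, (ψ j).natDegree = j)
    (hφon : ∀ i j, ∫ z, (φ i).eval z * (starRingEnd ℂ) ((φ j).eval z) ∂μ
      = if i = j then 1 else 0)
    (hψon : ∀ i j, ∫ z, (ψ i).eval z * (starRingEnd ℂ) ((ψ j).eval z) ∂ν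
      = if i = j then 1 else 0)
    (α : ℕ → ℂ) (hα : ∀ j, ‖α j‖ < 1)
    (hφ0 : φ 0 = 1) (hψ0 : ψ 0 = 1)
    (hφrec : ∀ j, C (Real.sqrt (1 - ‖α j‖ ^ 2) : ℂ) * φ (j + 1)
      = X * φ j - C ((starRingEnd ℂ) (α j)) * reflect j ((φ j).map (starRingEnd ℂ)))
    (hψrec : ∀ j, C (Real.sqrt (1 - ‖α j‖ ^ 2) : ℂ) * ψ (j + 1)
      = X * ψ j - C ((starRingEnd ℂ) (-α j)) * reflect j ((ψ j).map (starRingEnd ℂ)))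
    (lam : ℂ) (hlam : ‖lam‖ = 1)
    (n : ℕ) (hn : 1 ≤ n) :
    (∀ z : ℂ,
      ((starRingEnd ℂ) ((reflect n ((φ n).map (starRingEnd ℂ))).eval lam)
          * (reflect n ((ψ n).map (starRingEnd ℂ))).eval z
        + z * (starRingEnd ℂ) lam * (starRingEnd ℂ) ((φ n).eval lam) * (ψ n).eval z)
      - ((starRingEnd ℂ) ((reflect (n - 1) ((φ (n - 1)).map (starRingEnd ℂ))).eval lam)
          * (reflect (n - 1) ((ψ (n - 1)).map (starRingEnd ℂ))).eval z
        + z * (starRingEnd ℂ) lam * (starRingEnd ℂ) ((φ (n - 1)).eval lam)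
          * (ψ (n - 1)).eval z)
      = -(1 - (starRingEnd ℂ) lam * z) * (starRingEnd ℂ) ((φ n).eval lam) * (ψ n).eval z) ∧
    (∀ z : ℂ, ‖z‖ = 1 → z ≠ lam →
      -(1 - (starRingEnd ℂ) lam * z) * (starRingEnd ℂ) ((φ n).eval lam) * (ψ n).eval z
        ≠ 0) := by
  exact sn_difference_nonzero_aux φ ψ hφdeg hψdeg α hα hφ0 hψ0 hφrec hψrec lam hlam n hn
end
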